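/- arXiv:1008.4739 — 9 statements merged into one kernel-verified Lean document; each statement's English description precedes it below -/
import Mathlib

section
/- Let T be any special Aronszajn tree. Then there exist a set B ⊆ ℝ with no subset homeomorphic to the Cantor space 2^ω and a continuous order preserving map ψ : T → B (continuity with respect to the tree topology) such that for all x, y ∈ T, if x↓ ≠ y↓ then ψ(x) ≠ ψ(y). In particular, ψ is injective whenever T is Hausdorff in the tree topology. -/
/-- A tree: a type `T` with a strict partial order `lt` such that for each `x`,
the set of predecessors of `x` is well-ordered by `lt`. -/
structure TreeOrder (T : Type) where
  lt : T → T → Prop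
  trans : ∀ {x y z : T}, lt x y → lt y z → lt x z
  irrefl : ∀ x : T, ¬ lt x x
  wellOrdered : ∀ x : T, IsWellOrder {y : T // lt y x} fun a b => lt a.1 b.1

namespace TreeOrder

variable {T : Type} (S : TreeOrder T)

/-- `x↓`, the set of predecessors of `x`. -/
def below (x : T) : Set T := {y | S.lt y x}

/-- `x↑`, the set of elements above `x`. -/
def above (x : T) : Set T := {y | S.lt x y}

/-- The height of a node: the order type of `x↓`. -/
noncomputable def height (x : T) : Ordinal :=
  @Ordinal.type {y : T // S.lt y x} (fun a b => S.lt a.1 b.1) (S.wellOrdered x)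

/-- The `α`-th level `L_α(T)`. -/
def level (α : Ordinal) : Set T := {x | S.height x = α}

/-- A set `U` is open in the tree topology iff for every `y ∈ U` of limit height
there is `x ◁ y` with `x↑ ∩ y↓ ⊆ U`. -/
def TreeOpen (U : Set T) : Prop :=
  ∀ y ∈ U, Order.IsSuccLimit (S.height y) →
    ∃ x, S.lt x y ∧ ∀ z, S.lt x z → S.lt z y → z ∈ U

/-- Continuity with respect to the tree topology on `T`:
preimages of open sets are open in the tree topology. -/
def TContinuous {B : Type} [TopologicalSpace B] (ψ : T → B) : Prop :=
  ∀ V : Set B, IsOpen V → S.TreeOpen (ψ ⁻¹' V)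

/-- `A ⊆ T` is discrete in the tree topology: every point of `A` is isolated in `A`. -/
def TDiscrete (A : Set T) : Prop :=
  ∀ a ∈ A, ∃ U : Set T, S.TreeOpen U ∧ a ∈ U ∧ U ∩ A = {a}

/-- `T` is an `ω₁`-tree: it has cardinality `ℵ₁`, all levels are countable, and
the level `ω₁` is empty. -/
def IsOmega1Tree : Prop :=
  Cardinal.mk T = Cardinal.aleph 1 ∧
  (∀ α : Ordinal, (S.level α).Countable) ∧
  S.level (Cardinal.aleph 1).ord = ∅

/-- An Aronszajn tree is an `ω₁`-tree with no uncountable chains. -/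
def IsAronszajn : Prop :=
  S.IsOmega1Tree ∧ ∀ C : Set T, IsChain S.lt C → C.Countable

/-- A special Aronszajn tree: an Aronszajn tree which is a countable union of antichains. -/
def IsSpecialAronszajn : Prop :=
  S.IsAronszajn ∧
  ∃ A : ℕ → Set T, (∀ n, IsAntichain S.lt (A n)) ∧ (⋃ n, A n) = Set.univ

end TreeOrder

/-- `C` is closed in `κ`: it contains each of its limit points below `κ`. -/
def IsClosedIn (C : Set Ordinal.{0}) (κ : Ordinal.{0}) : Prop :=
  ∀ α < κ, α ≠ 0 → (∀ β < α, ∃ γ ∈ C, β < γ ∧ γ < α) → α ∈ C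

/-- `C` is club in `κ`: closed and unbounded in `κ`. -/
def IsClubIn (C : Set Ordinal.{0}) (κ : Ordinal.{0}) : Prop :=
  IsClosedIn C κ ∧ ∀ α < κ, ∃ β ∈ C, α < β ∧ β < κ

/-- `A` is stationary in `κ`: it meets every club subset of `κ`. -/
def IsStationaryIn (A : Set Ordinal.{0}) (κ : Ordinal.{0}) : Prop :=
  ∀ C : Set Ordinal, IsClubIn C κ → (A ∩ C).Nonempty

/-- A subset of a tree is stationary iff its set of heights is stationary in `ω₁`. -/
def TreeOrder.TStationary {T : Type} (S : TreeOrder T) (A : Set T) : Prop :=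
  IsStationaryIn (S.height '' A) (Cardinal.aleph 1).ord

/-- The pruning `U^p` of `U`: all `x ∈ U` such that `x↑ ∩ U` is stationary. -/
def TreeOrder.prune {T : Type} (S : TreeOrder T) (U : Set T) : Set T :=
  {x | x ∈ U ∧ S.TStationary (S.above x ∩ U)}

/-- The diamond principle `◊`: there is a sequence `⟨A_α : α < ω₁⟩` with `A_α ⊆ α`
such that for every `A ⊆ ω₁`, the set `{α : A ∩ α = A_α}` is stationary in `ω₁`. -/
def DiamondPrinciple : Prop :=
  ∃ A : Ordinal.{0} → Set Ordinal.{0},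
    (∀ α, A α ⊆ Set.Iio α) ∧
    ∀ X : Set Ordinal.{0}, X ⊆ Set.Iio (Cardinal.aleph 1).ord →
      IsStationaryIn {α | X ∩ Set.Iio α = A α} (Cardinal.aleph 1).ord


open Classical Set

noncomputable section

namespace CantorAux

/-- weight of index `n` -/
def wt (n : ℕ) : ℝ := 2 * (3:ℝ)⁻¹ ^ (n+1)

lemma wt_pos (n : ℕ) : 0 < wt n := by unfold wt; positivity

lemma wt_nonneg (n : ℕ) : 0 ≤ wt n := (wt_pos n).le

lemma sum_wt_Icc (a b : ℕ) (h : a ≤ b) :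
    ∑ m ∈ Finset.Icc (a+1) b, wt m = (3:ℝ)⁻¹^(a+1) - (3:ℝ)⁻¹^(b+1) := by
  induction b, h using Nat.le_induction with
  | base => simp
  | succ b hb ih =>
      rw [Finset.sum_Icc_succ_top (by omega), ih]
      show _ = (3:ℝ)⁻¹^(a+1) - (3:ℝ)⁻¹^(b+1+1)
      rw [pow_succ]
      unfold wt
      rw [pow_succ]
      ring

lemma sum_wt_le_of_Ioi (G : Finset ℕ) (a : ℕ) (hG : ∀ m ∈ G, a < m) :
    ∑ m ∈ G, wt m ≤ (3:ℝ)⁻¹^(a+1) := by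
  rcases G.eq_empty_or_nonempty with h|h
  · simp only [h, Finset.sum_empty]; positivity
  · set b := G.max' h with hb
    have hab : a ≤ b := le_of_lt (hG _ (G.max'_mem h))
    have hsub : G ⊆ Finset.Icc (a+1) b := by
      intro m hm; rw [Finset.mem_Icc]
      exact ⟨hG m hm, Finset.le_max' _ _ hm⟩
    have h1 : ∑ m ∈ G, wt m ≤ ∑ m ∈ Finset.Icc (a+1) b, wt m :=
      Finset.sum_le_sum_of_subset_of_nonneg hsub (fun i _ _ => wt_nonneg i)
    have h2 := sum_wt_Icc a b hab
    have h3 : (0:ℝ) < (3:ℝ)⁻¹^(b+1) := by positivity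
    linarith

lemma sum_wt_range (M : ℕ) : ∑ m ∈ Finset.range M, wt m = 1 - (3:ℝ)⁻¹^M := by
  induction M with
  | zero => simp
  | succ M ih =>
      rw [Finset.sum_range_succ, ih]
      unfold wt; rw [pow_succ]; ring

lemma sum_wt_le_one (G : Finset ℕ) : ∑ m ∈ G, wt m ≤ 1 := by
  rcases G.eq_empty_or_nonempty with h|h
  · simp [h]
  · set b := G.max' h with hb
    have hsub : G ⊆ Finset.range (b+1) := by
      intro m hm; rw [Finset.mem_range]
      have := Finset.le_max' _ _ hm; omega
    have h1 : ∑ m ∈ G, wt m ≤ ∑ m ∈ Finset.range (b+1), wt m :=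
      Finset.sum_le_sum_of_subset_of_nonneg hsub (fun i _ _ => wt_nonneg i)
    rw [sum_wt_range] at h1
    have h3 : (0:ℝ) < (3:ℝ)⁻¹^(b+1) := by positivity
    linarith

/-- distinct finsets have distinct weight sums -/
lemma sum_wt_inj {F G : Finset ℕ} (h : F.sum wt = G.sum wt) : F = G := by
  by_contra hne
  have hsd : (symmDiff F G).Nonempty := by
    rw [Finset.nonempty_iff_ne_empty]
    intro h0
    exact hne (by simpa [symmDiff_eq_bot] using h0)
  classical
  set j := (symmDiff F G).min' hsd with hj
  have hjmem : j ∈ symmDiff F G := (symmDiff F G).min'_mem hsd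
  have hagree : ∀ m, m < j → (m ∈ F ↔ m ∈ G) := by
    intro m hm
    by_contra hiff
    have : m ∈ symmDiff F G := by
      rw [Finset.mem_symmDiff]
      rcases Classical.em (m ∈ F) with h1|h1
      · left; exact ⟨h1, fun h2 => hiff ⟨fun _ => h2, fun _ => h1⟩⟩
      · right
        rcases Classical.em (m ∈ G) with h2|h2
        · exact ⟨h2, h1⟩
        · exact absurd ⟨fun h3 => absurd h3 h1, fun h3 => absurd h3 h2⟩ hiff
    have := (symmDiff F G).min'_le _ this
    omega
  -- wlog j ∈ F \ G
  have key : ∀ F G : Finset ℕ, F.sum wt = G.sum wt →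
      (∀ m, m < j → (m ∈ F ↔ m ∈ G)) → j ∈ F → j ∉ G → False := by
    intro F G hsum hag hjF hjG
    -- split F and G at j
    have hFsplit : F = (F.filter (· < j)) ∪ (F.filter (¬ · < j)) := by
      rw [Finset.filter_union_filter_not_eq]
    have hGsplit : G = (G.filter (· < j)) ∪ (G.filter (¬ · < j)) := by
      rw [Finset.filter_union_filter_not_eq]
    have hdF : Disjoint (F.filter (· < j)) (F.filter (¬ · < j)) :=
      Finset.disjoint_filter_filter_not F F (· < j)
    have hdG : Disjoint (G.filter (· < j)) (G.filter (¬ · < j)) :=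
      Finset.disjoint_filter_filter_not G G (· < j)
    have hFsum : F.sum wt = (F.filter (· < j)).sum wt + (F.filter (¬ · < j)).sum wt := by
      conv_lhs => rw [hFsplit]
      exact Finset.sum_union hdF
    have hGsum : G.sum wt = (G.filter (· < j)).sum wt + (G.filter (¬ · < j)).sum wt := by
      conv_lhs => rw [hGsplit]
      exact Finset.sum_union hdG
    have heqlow : (F.filter (· < j)) = (G.filter (· < j)) := by
      ext m
      simp only [Finset.mem_filter]
      constructor
      · rintro ⟨h1, h2⟩; exact ⟨(hag m h2).1 h1, h2⟩
      · rintro ⟨h1, h2⟩; exact ⟨(hag m h2).2 h1, h2⟩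
    -- F high part contains j
    have hjhigh : j ∈ F.filter (¬ · < j) := by
      rw [Finset.mem_filter]; exact ⟨hjF, by omega⟩
    have hFhigh : (F.filter (¬ · < j)).sum wt ≥ wt j := by
      have := Finset.sum_le_sum_of_subset_of_nonneg
        (Finset.singleton_subset_iff.mpr hjhigh) (fun i _ _ => wt_nonneg i)
      simpa using this
    have hGhigh : (G.filter (¬ · < j)).sum wt ≤ (3:ℝ)⁻¹^(j+1) := by
      apply sum_wt_le_of_Ioi
      intro m hm
      rw [Finset.mem_filter] at hm
      have h1 : ¬ m < j := hm.2
      have h2 : m ≠ j := fun h => hjG (h ▸ hm.1)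
      omega
    have hwtj : wt j = 2 * (3:ℝ)⁻¹^(j+1) := rfl
    have hpos : (0:ℝ) < (3:ℝ)⁻¹^(j+1) := by positivity
    rw [hFsum, hGsum, heqlow] at hsum
    linarith
  rw [Finset.mem_symmDiff] at hjmem
  rcases hjmem with ⟨h1, h2⟩|⟨h1, h2⟩
  · exact key F G h hagree h1 h2
  · exact key G F h.symm (fun m hm => (hagree m hm).symm) h1 h2


/-- The sum of weights over a set of naturals. -/
def Theta (U : Set ℕ) : ℝ := ∑' n, U.indicator wt n

lemma summable_wt : Summable wt := by
  have h := summable_geometric_of_lt_one (r := (3:ℝ)⁻¹) (by norm_num) (by norm_num)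
  have h2 := h.mul_left (2 * (3:ℝ)⁻¹)
  apply h2.congr
  intro n
  unfold wt
  rw [pow_succ]
  ring

lemma summable_ind (U : Set ℕ) : Summable (U.indicator wt) :=
  summable_wt.indicator U

lemma Theta_nonneg (U : Set ℕ) : 0 ≤ Theta U :=
  tsum_nonneg (fun n => Set.indicator_apply_nonneg (fun _ => wt_nonneg n))

lemma Theta_mono {U V : Set ℕ} (h : U ⊆ V) : Theta U ≤ Theta V := by
  apply Summable.tsum_le_tsum _ (summable_ind U) (summable_ind V)
  intro n
  exact Set.indicator_le_indicator_of_subset h (fun _ => wt_nonneg _) n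

lemma Theta_union {U V : Set ℕ} (h : Disjoint U V) :
    Theta (U ∪ V) = Theta U + Theta V := by
  unfold Theta
  rw [Set.indicator_union_of_disjoint h]
  exact Summable.tsum_add (summable_ind U) (summable_ind V)

lemma Theta_singleton (j : ℕ) : Theta {j} = wt j := by
  unfold Theta
  rw [tsum_eq_single j]
  · simp
  · intro n hn
    exact Set.indicator_of_notMem (by simpa using hn) wt

lemma sum_ind_eq_filter (U : Set ℕ) (s : Finset ℕ) :
    ∑ n ∈ s, U.indicator wt n = ∑ n ∈ s.filter (fun n => n ∈ U), wt n := by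
  rw [Finset.sum_filter]
  apply Finset.sum_congr rfl
  intro n _
  by_cases hn : n ∈ U <;> simp [Set.indicator_apply, hn]

lemma Theta_le_tail {U : Set ℕ} {a : ℕ} (h : ∀ n ∈ U, a < n) :
    Theta U ≤ (3:ℝ)⁻¹^(a+1) := by
  apply Summable.tsum_le_of_sum_le (summable_ind U)
  intro s
  rw [sum_ind_eq_filter]
  apply sum_wt_le_of_Ioi
  intro m hm
  rw [Finset.mem_filter] at hm
  exact h m hm.2

lemma Theta_le_one (U : Set ℕ) : Theta U ≤ 1 := by
  apply Summable.tsum_le_of_sum_le (summable_ind U)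
  intro s
  rw [sum_ind_eq_filter]
  exact sum_wt_le_one _

lemma Theta_finset (G : Finset ℕ) : Theta (↑G) = G.sum wt := by
  unfold Theta
  rw [tsum_eq_sum (s := G)]
  · apply Finset.sum_congr rfl
    intro n hn
    exact Set.indicator_of_mem (by simpa using hn) wt
  · intro n hn
    exact Set.indicator_of_notMem (by simpa using hn) wt

/-- main gap estimate -/
lemma Theta_gap {U V : Set ℕ} {j : ℕ} (hjU : j ∈ U) (hjV : j ∉ V)
    (hagree : ∀ m, m < j → (m ∈ U ↔ m ∈ V)) :
    Theta V + (3:ℝ)⁻¹^(j+1) ≤ Theta U := by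
  have hUdec : U = (U ∩ Iio j) ∪ ({j} ∪ (U ∩ Ioi j)) := by
    ext m
    simp only [Set.mem_union, Set.mem_inter_iff, Set.mem_Iio, Set.mem_Ioi,
      Set.mem_singleton_iff]
    constructor
    · intro hm
      rcases lt_trichotomy m j with h|h|h
      · exact Or.inl ⟨hm, h⟩
      · exact Or.inr (Or.inl h)
      · exact Or.inr (Or.inr ⟨hm, h⟩)
    · rintro (⟨hm,_⟩|h|⟨hm,_⟩)
      · exact hm
      · exact h ▸ hjU
      · exact hm
  have hVdec : V = (V ∩ Iio j) ∪ (V ∩ Ioi j) := by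
    ext m
    simp only [Set.mem_union, Set.mem_inter_iff, Set.mem_Iio, Set.mem_Ioi]
    constructor
    · intro hm
      rcases lt_trichotomy m j with h|h|h
      · exact Or.inl ⟨hm, h⟩
      · exact absurd (h ▸ hm) hjV
      · exact Or.inr ⟨hm, h⟩
    · rintro (⟨hm,_⟩|⟨hm,_⟩) <;> exact hm
  have d1 : Disjoint (U ∩ Iio j) ({j} ∪ (U ∩ Ioi j)) := by
    rw [Set.disjoint_left]
    rintro m ⟨_, hm⟩ (h|⟨_, h⟩)
    · rw [Set.mem_singleton_iff] at h; rw [Set.mem_Iio] at hm; omega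
    · rw [Set.mem_Ioi] at h; rw [Set.mem_Iio] at hm; omega
  have d2 : Disjoint ({j} : Set ℕ) (U ∩ Ioi j) := by
    rw [Set.disjoint_left]
    rintro m h ⟨_, h2⟩
    rw [Set.mem_singleton_iff] at h; rw [Set.mem_Ioi] at h2; omega
  have d3 : Disjoint (V ∩ Iio j) (V ∩ Ioi j) := by
    rw [Set.disjoint_left]
    rintro m ⟨_, hm⟩ ⟨_, h2⟩
    rw [Set.mem_Iio] at hm; rw [Set.mem_Ioi] at h2; omega
  have hU : Theta U = Theta (U ∩ Iio j) + (wt j + Theta (U ∩ Ioi j)) := by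
    conv_lhs => rw [hUdec]
    rw [Theta_union d1, Theta_union d2, Theta_singleton]
  have hV : Theta V = Theta (V ∩ Iio j) + Theta (V ∩ Ioi j) := by
    conv_lhs => rw [hVdec]
    rw [Theta_union d3]
  have heq : V ∩ Iio j = U ∩ Iio j := by
    ext m
    simp only [Set.mem_inter_iff, Set.mem_Iio]
    constructor
    · rintro ⟨h1, h2⟩; exact ⟨(hagree m h2).2 h1, h2⟩
    · rintro ⟨h1, h2⟩; exact ⟨(hagree m h2).1 h1, h2⟩
  have htail : Theta (V ∩ Ioi j) ≤ (3:ℝ)⁻¹^(j+1) :=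
    Theta_le_tail (fun n hn => hn.2)
  have hpos : 0 ≤ Theta (U ∩ Ioi j) := Theta_nonneg _
  have hwtj : wt j = 2 * (3:ℝ)⁻¹^(j+1) := rfl
  rw [hU, hV, heq]
  linarith

lemma exists_least_diff {U V : Set ℕ} (h : U ≠ V) :
    ∃ j, (¬ (j ∈ U ↔ j ∈ V)) ∧ ∀ m, m < j → (m ∈ U ↔ m ∈ V) := by
  have hex : ∃ n, ¬ (n ∈ U ↔ n ∈ V) := by
    by_contra hc
    push_neg at hc
    exact h (Set.ext (fun n => hc n))
  refine ⟨Nat.find hex, Nat.find_spec hex, fun m hm => ?_⟩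
  have := Nat.find_min hex hm
  tauto

lemma Theta_inj {U V : Set ℕ} (h : Theta U = Theta V) : U = V := by
  by_contra hne
  obtain ⟨j, hj, hagree⟩ := exists_least_diff hne
  have hpos : (0:ℝ) < (3:ℝ)⁻¹^(j+1) := by positivity
  rcases Classical.em (j ∈ U) with h1|h1
  · have h2 : j ∉ V := fun h2 => hj ⟨fun _ => h2, fun _ => h1⟩
    have := Theta_gap h1 h2 hagree
    linarith
  · have h2 : j ∈ V := by tauto
    have := Theta_gap h2 h1 (fun m hm => (hagree m hm).symm)
    linarith

lemma mem_iff_of_close {U V : Set ℕ} {m : ℕ}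
    (h : |Theta U - Theta V| < (3:ℝ)⁻¹^(m+1)) : m ∈ U ↔ m ∈ V := by
  by_contra hiff
  have hex : ∃ n, ¬ (n ∈ U ↔ n ∈ V) := ⟨m, hiff⟩
  set j := Nat.find hex with hj
  have hjle : j ≤ m := Nat.find_min' hex hiff
  have hjspec := Nat.find_spec hex
  have hagree : ∀ k, k < j → (k ∈ U ↔ k ∈ V) := by
    intro k hk
    have := Nat.find_min hex hk
    tauto
  have hmono : (3:ℝ)⁻¹^(m+1) ≤ (3:ℝ)⁻¹^(j+1) := by
    apply pow_le_pow_of_le_one (by norm_num) (by norm_num)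
    omega
  rcases Classical.em (j ∈ U) with h1|h1
  · have h2 : j ∉ V := fun h2 => hjspec ⟨fun _ => h2, fun _ => h1⟩
    have := Theta_gap h1 h2 hagree
    have habs : Theta U - Theta V ≤ |Theta U - Theta V| := le_abs_self _
    linarith
  · have h2 : j ∈ V := by tauto
    have := Theta_gap h2 h1 (fun k hk => (hagree k hk).symm)
    have habs : Theta V - Theta U ≤ |Theta U - Theta V| := by
      rw [abs_sub_comm]; exact le_abs_self _
    linarith


/-- environment: a tree with a refined antichain decomposition -/
structure Env (T : Type) where
  S : TreeOrder T
  Ab : ℕ → Set T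
  hanti : ∀ n, IsAntichain S.lt (Ab n)
  hcov : ∀ x : T, ∃ n, x ∈ Ab n
  k0 : T → ℕ
  hk0 : ∀ x y, S.below x = S.below y → k0 x = k0 y → x = y

namespace Env

variable {T : Type} (E : Env T)

lemma tri3 {u v y : T} (hu : E.S.lt u y) (hv : E.S.lt v y) :
    E.S.lt u v ∨ u = v ∨ E.S.lt v u := by
  haveI := E.S.wellOrdered y
  rcases @trichotomous _ (fun a b : {z // E.S.lt z y} => E.S.lt a.1 b.1) _ ⟨u,hu⟩ ⟨v,hv⟩
    with h|h|h
  · exact Or.inl h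
  · exact Or.inr (Or.inl (congrArg Subtype.val h))
  · exact Or.inr (Or.inr h)

lemma exN (x : T) : ∃ m : ℕ, x ∈ E.Ab (Nat.unpair m).1 ∧ E.k0 x = (Nat.unpair m).2 := by
  obtain ⟨n, hn⟩ := E.hcov x
  exact ⟨Nat.pair n (E.k0 x), by rw [Nat.unpair_pair]; exact ⟨hn, rfl⟩⟩

/-- refined piece index of a node -/
noncomputable def N (x : T) : ℕ := Nat.find (E.exN x)

lemma N_spec (x : T) :
    x ∈ E.Ab (Nat.unpair (E.N x)).1 ∧ E.k0 x = (Nat.unpair (E.N x)).2 :=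
  Nat.find_spec (E.exN x)

lemma N_lt_false {u v : T} (hlt : E.S.lt u v) (hN : E.N u = E.N v) : False := by
  have hu := (E.N_spec u).1
  have hv := (E.N_spec v).1
  rw [hN] at hu
  have hne : u ≠ v := fun h => E.S.irrefl v (h ▸ hlt)
  exact E.hanti _ hu hv hne hlt

lemma N_tw {u v : T} (hb : E.S.below u = E.S.below v) (hN : E.N u = E.N v) : u = v := by
  have hu := (E.N_spec u).2
  have hv := (E.N_spec v).2
  exact E.hk0 u v hb (by rw [hu, hN, hv])

/-- the finite set of piece indices below-or-at `x`, cut off at `N x` -/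
noncomputable def F (x : T) : Finset ℕ :=
  (Finset.range (E.N x + 1)).filter (fun m => ∃ z, (E.S.lt z x ∨ z = x) ∧ E.N z = m)

lemma mem_F {x : T} {m : ℕ} :
    m ∈ E.F x ↔ m ≤ E.N x ∧ ∃ z, (E.S.lt z x ∨ z = x) ∧ E.N z = m := by
  simp [F, Nat.lt_succ_iff]

lemma self_mem_F (x : T) : E.N x ∈ E.F x :=
  E.mem_F.mpr ⟨le_rfl, x, Or.inr rfl, rfl⟩

/-- the rational label -/
noncomputable def sig (x : T) : ℝ := (E.F x).sum wt

lemma sig_lt_of_lt {x y : T} (hxy : E.S.lt x y) : E.sig x < E.sig y := by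
  have hsublt : ∀ z, (E.S.lt z x ∨ z = x) → E.S.lt z y := by
    rintro z (h|rfl)
    · exact E.S.trans h hxy
    · exact hxy
  rcases le_or_gt (E.N x) (E.N y) with hN|hN
  · -- F x ⊆ F y and N y new
    have hsub : E.F x ⊆ E.F y := by
      intro m hm
      obtain ⟨hle, z, hz, hNz⟩ := E.mem_F.mp hm
      exact E.mem_F.mpr ⟨le_trans hle hN, z, Or.inl (hsublt z hz), hNz⟩
    have hNy : E.N y ∉ E.F x := by
      intro hmem
      obtain ⟨_, z, hz, hNz⟩ := E.mem_F.mp hmem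
      exact E.N_lt_false (hsublt z hz) hNz
    exact Finset.sum_lt_sum_of_subset hsub (E.self_mem_F y) hNy (wt_pos _)
      (fun j _ _ => wt_nonneg j)
  · -- N y < N x
    set L := (E.F x).filter (fun m => m ≤ E.N y) with hL
    set H := (E.F x).filter (fun m => ¬ m ≤ E.N y) with hH
    have hsplit : E.sig x = L.sum wt + H.sum wt := by
      rw [sig, ← Finset.sum_filter_add_sum_filter_not (E.F x) (fun m => m ≤ E.N y)]
    have hHbound : H.sum wt ≤ (3:ℝ)⁻¹^(E.N y + 1) := by
      apply sum_wt_le_of_Ioi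
      intro m hm
      rw [hH, Finset.mem_filter] at hm
      omega
    have hNyL : E.N y ∉ L := by
      intro hmem
      rw [hL, Finset.mem_filter] at hmem
      obtain ⟨_, z, hz, hNz⟩ := E.mem_F.mp hmem.1
      exact E.N_lt_false (hsublt z hz) hNz
    have hsub : insert (E.N y) L ⊆ E.F y := by
      intro m hm
      rcases Finset.mem_insert.mp hm with rfl|hm
      · exact E.self_mem_F y
      · rw [hL, Finset.mem_filter] at hm
        obtain ⟨hm1, hm2⟩ := hm
        obtain ⟨_, z, hz, hNz⟩ := E.mem_F.mp hm1
        exact E.mem_F.mpr ⟨hm2, z, Or.inl (hsublt z hz), hNz⟩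
    have h1 : (insert (E.N y) L).sum wt ≤ E.sig y :=
      Finset.sum_le_sum_of_subset_of_nonneg hsub (fun i _ _ => wt_nonneg i)
    rw [Finset.sum_insert hNyL] at h1
    have hwt : wt (E.N y) = 2 * (3:ℝ)⁻¹^(E.N y + 1) := rfl
    have hpos : (0:ℝ) < (3:ℝ)⁻¹^(E.N y + 1) := by positivity
    linarith

/-- twins (distinct nodes with equal sets of predecessors) receive distinct labels -/
lemma sig_tw_lt {x y : T} (hb : E.S.below x = E.S.below y) (hN : E.N x < E.N y) :
    E.sig y < E.sig x := by
  have hbel : ∀ z, E.S.lt z x ↔ E.S.lt z y := fun z =>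
    ⟨fun h => (hb ▸ (h : z ∈ E.S.below x) : z ∈ E.S.below y),
     fun h => (hb.symm ▸ (h : z ∈ E.S.below y) : z ∈ E.S.below x)⟩
  set L := (E.F y).filter (fun m => m ≤ E.N x) with hL
  set H := (E.F y).filter (fun m => ¬ m ≤ E.N x) with hH
  have hsplit : E.sig y = L.sum wt + H.sum wt := by
    rw [sig, ← Finset.sum_filter_add_sum_filter_not (E.F y) (fun m => m ≤ E.N x)]
  have hHbound : H.sum wt ≤ (3:ℝ)⁻¹^(E.N x + 1) := by
    apply sum_wt_le_of_Ioi
    intro m hm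
    rw [hH, Finset.mem_filter] at hm
    omega
  have hLeq : L = (E.F x).erase (E.N x) := by
    ext m
    rw [Finset.mem_erase, hL, Finset.mem_filter]
    constructor
    · rintro ⟨hm1, hm2⟩
      obtain ⟨hle, z, hz, hNz⟩ := E.mem_F.mp hm1
      rcases hz with hz|rfl
      · have hzx : E.S.lt z x := (hbel z).mpr hz
        refine ⟨?_, E.mem_F.mpr ⟨hm2, z, Or.inl hzx, hNz⟩⟩
        intro heq
        exact E.N_lt_false hzx (by omega)
      · omega
    · rintro ⟨hne, hm⟩
      obtain ⟨hle, z, hz, hNz⟩ := E.mem_F.mp hm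
      rcases hz with hz|rfl
      · have hzy : E.S.lt z y := (hbel z).mp hz
        refine ⟨E.mem_F.mpr ⟨by omega, z, Or.inl hzy, hNz⟩, hle⟩
      · omega
  have herase : ((E.F x).erase (E.N x)).sum wt = E.sig x - wt (E.N x) := by
    rw [sig, Finset.sum_erase_eq_sub (E.self_mem_F x)]
  have hwt : wt (E.N x) = 2 * (3:ℝ)⁻¹^(E.N x + 1) := rfl
  rw [hsplit, hLeq, herase]
  have hpos : (0:ℝ) < (3:ℝ)⁻¹^(E.N x + 1) := by positivity
  linarith

lemma sig_tw_ne {x y : T} (hb : E.S.below x = E.S.below y) (hne : x ≠ y) :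
    E.sig x ≠ E.sig y := by
  have hNne : E.N x ≠ E.N y := fun h => hne (E.N_tw hb h)
  rcases Nat.lt_or_ge (E.N x) (E.N y) with h|h
  · exact (E.sig_tw_lt hb h).ne'
  · have h2 : E.N y < E.N x := by omega
    exact (E.sig_tw_lt hb.symm h2).ne

/-- natural number code of a node -/
noncomputable def code (x : T) : ℕ := Encodable.encode (E.F x)

lemma F_eq_of_code_eq {x y : T} (h : E.code x = E.code y) : E.F x = E.F y :=
  Encodable.encode_injective h

lemma sig_eq_of_code_eq {x y : T} (h : E.code x = E.code y) : E.sig x = E.sig y := by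
  unfold sig; rw [E.F_eq_of_code_eq h]

/-- the code set of a node: codes of all its predecessors -/
def cset (x : T) : Set ℕ := E.code '' (E.S.below x)

lemma mem_cset {x : T} {n : ℕ} : n ∈ E.cset x ↔ ∃ z, E.S.lt z x ∧ E.code z = n := by
  constructor
  · rintro ⟨z, hz, rfl⟩
    exact ⟨z, hz, rfl⟩
  · rintro ⟨z, hz, rfl⟩
    exact ⟨z, hz, rfl⟩

lemma code_notmem_self (x : T) : E.code x ∉ E.cset x := by
  intro h
  obtain ⟨z, hz, hcode⟩ := E.mem_cset.mp h
  exact (E.sig_lt_of_lt hz).ne (E.sig_eq_of_code_eq hcode)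

lemma cset_mono {x y : T} (h : E.S.lt x y) : E.cset x ⊆ E.cset y := by
  apply Set.image_mono
  intro z hz
  exact E.S.trans hz h

/-- the map ψ -/
noncomputable def psi (x : T) : ℝ := Theta (E.cset x)

lemma psi_lt_of_lt {x y : T} (h : E.S.lt x y) : E.psi x < E.psi y := by
  have h1 : E.cset x ∪ {E.code x} ⊆ E.cset y := by
    apply Set.union_subset (E.cset_mono h)
    intro n hn
    rw [Set.mem_singleton_iff] at hn
    exact hn ▸ E.mem_cset.mpr ⟨x, h, rfl⟩
  have hdisj : Disjoint (E.cset x) ({E.code x} : Set ℕ) := by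
    rw [Set.disjoint_singleton_right]
    exact E.code_notmem_self x
  have h2 : Theta (E.cset x ∪ {E.code x}) = E.psi x + wt (E.code x) := by
    rw [Theta_union hdisj, Theta_singleton]; rfl
  have h3 := Theta_mono h1
  rw [h2] at h3
  have := wt_pos (E.code x)
  show E.psi x < Theta (E.cset y)
  linarith

lemma code_inj_below {y : T} {z1 z2 : T} (h1 : E.S.lt z1 y) (h2 : E.S.lt z2 y)
    (hc : E.code z1 = E.code z2) : z1 = z2 := by
  rcases E.tri3 h1 h2 with h|h|h
  · exact absurd (E.sig_eq_of_code_eq hc) (E.sig_lt_of_lt h).ne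
  · exact h
  · exact absurd (E.sig_eq_of_code_eq hc).symm (E.sig_lt_of_lt h).ne

lemma exists_min_below {x : T} {D : Set T} (hD : D ⊆ E.S.below x) (hne : D.Nonempty) :
    ∃ m ∈ D, ∀ z ∈ D, ¬ E.S.lt z m := by
  have wf : WellFounded (fun a b : {z // E.S.lt z x} => E.S.lt a.1 b.1) :=
    (E.S.wellOrdered x).toIsWellFounded.wf
  set D' : Set {z // E.S.lt z x} := {z | z.1 ∈ D} with hD'
  have hne' : D'.Nonempty := ⟨⟨hne.choose, hD hne.choose_spec⟩, hne.choose_spec⟩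
  obtain ⟨m, hm, hmin⟩ := wf.has_min D' hne'
  exact ⟨m.1, hm, fun z hz hlt => hmin ⟨z, hD hz⟩ hz hlt⟩

/-- minimal elements of the difference of two branches are twins over the common part -/
lemma min_diff_below {x y x₁ : T} (h1 : x₁ ∈ E.S.below x) (h1' : x₁ ∉ E.S.below y)
    (hmin : ∀ z, z ∈ E.S.below x \ E.S.below y → ¬ E.S.lt z x₁) :
    E.S.below x₁ = E.S.below x ∩ E.S.below y := by
  ext z
  constructor
  · intro hz
    have hzx : z ∈ E.S.below x := E.S.trans hz h1
    constructor
    · exact hzx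
    · by_contra hzy
      exact hmin z ⟨hzx, hzy⟩ hz
  · rintro ⟨hzx, hzy⟩
    rcases E.tri3 hzx h1 with h|h|h
    · exact h
    · exact absurd (h ▸ hzy) h1'
    · exact absurd (E.S.trans h (hzy : E.S.lt z y)) h1'

lemma sep_core {x y x₁ x₂ : T}
    (_h1 : x₁ ∈ E.S.below x) (_h1' : x₁ ∉ E.S.below y) (h2 : x₂ ∈ E.S.below y)
    (hb1 : E.S.below x₁ = E.S.below x ∩ E.S.below y)
    (hb2 : E.S.below x₂ = E.S.below x ∩ E.S.below y)
    (hsig : E.sig x₁ < E.sig x₂) :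
    E.code x₁ ∉ E.cset y := by
  intro hmem
  obtain ⟨z, hzy, hcode⟩ := E.mem_cset.mp hmem
  have hsigz : E.sig z = E.sig x₁ := E.sig_eq_of_code_eq hcode
  rcases Classical.em (z ∈ E.S.below x) with hzx|hzx
  · -- z in common part: z < x₁
    have hz1 : E.S.lt z x₁ := by
      have hmem : z ∈ E.S.below x₁ := hb1 ▸ Set.mem_inter hzx hzy
      exact hmem
    have hlt := E.sig_lt_of_lt hz1
    rw [hsigz] at hlt
    exact lt_irrefl _ hlt
  · -- z in below y \ below x; compare with x₂
    rcases E.tri3 hzy h2 with h|h|h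
    · have : z ∈ E.S.below x₂ := h
      rw [hb2] at this
      exact hzx this.1
    · rw [h] at hsigz
      rw [hsigz] at hsig
      exact lt_irrefl _ hsig
    · have := E.sig_lt_of_lt h
      rw [hsigz] at this
      exact lt_irrefl _ (lt_trans this hsig)

lemma cset_ne_of_below_ne {x y : T} (hne : E.S.below x ≠ E.S.below y) :
    E.cset x ≠ E.cset y := by
  have easy : ∀ x y : T, (E.S.below x \ E.S.below y).Nonempty →
      E.S.below y ⊆ E.S.below x → E.cset x ≠ E.cset y := by
    intro x y hDx hsub
    obtain ⟨x₁, hx₁, hmin1⟩ := E.exists_min_below (D := E.S.below x \ E.S.below y)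
      (fun z hz => hz.1) hDx
    have hb1 : E.S.below x₁ = E.S.below x ∩ E.S.below y :=
      E.min_diff_below hx₁.1 hx₁.2 hmin1
    have hb1' : E.S.below x₁ = E.S.below y := by
      rw [hb1]
      exact Set.inter_eq_self_of_subset_right hsub
    have hout : E.code x₁ ∉ E.cset y := by
      intro hmem
      obtain ⟨z, hzy, hcode⟩ := E.mem_cset.mp hmem
      have hsigz : E.sig z = E.sig x₁ := E.sig_eq_of_code_eq hcode
      have hz1 : E.S.lt z x₁ := by
        have hmem2 : z ∈ E.S.below x₁ := by rw [hb1']; exact hzy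
        exact hmem2
      have hlt := E.sig_lt_of_lt hz1
      rw [hsigz] at hlt
      exact lt_irrefl _ hlt
    have hin : E.code x₁ ∈ E.cset x := E.mem_cset.mpr ⟨x₁, hx₁.1, rfl⟩
    intro hcs
    rw [hcs] at hin
    exact hout hin
  have main : ∀ x y : T, (E.S.below x \ E.S.below y).Nonempty →
      (E.S.below y \ E.S.below x).Nonempty → E.cset x ≠ E.cset y := by
    intro x y hDx hDy
    obtain ⟨x₁, hx₁, hmin1⟩ := E.exists_min_below (D := E.S.below x \ E.S.below y)
      (fun z hz => hz.1) hDx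
    obtain ⟨x₂, hx₂, hmin2⟩ := E.exists_min_below (D := E.S.below y \ E.S.below x)
      (fun z hz => hz.1) hDy
    have hb1 : E.S.below x₁ = E.S.below x ∩ E.S.below y :=
      E.min_diff_below hx₁.1 hx₁.2 hmin1
    have hb2' : E.S.below x₂ = E.S.below y ∩ E.S.below x :=
      E.min_diff_below hx₂.1 hx₂.2 hmin2
    have hb2 : E.S.below x₂ = E.S.below x ∩ E.S.below y := by
      rw [hb2', Set.inter_comm]
    have hne12 : x₁ ≠ x₂ := by
      intro h
      exact hx₁.2 (h ▸ hx₂.1)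
    have hsigne : E.sig x₁ ≠ E.sig x₂ :=
      E.sig_tw_ne (hb1.trans hb2.symm) hne12
    rcases lt_or_gt_of_ne hsigne with h|h
    · intro hcs
      have hin : E.code x₁ ∈ E.cset x := E.mem_cset.mpr ⟨x₁, hx₁.1, rfl⟩
      have hout : E.code x₁ ∉ E.cset y := E.sep_core hx₁.1 hx₁.2 hx₂.1 hb1 hb2 h
      rw [hcs] at hin
      exact hout hin
    · intro hcs
      have hin : E.code x₂ ∈ E.cset y := E.mem_cset.mpr ⟨x₂, hx₂.1, rfl⟩
      have hb1'' : E.S.below x₁ = E.S.below y ∩ E.S.below x := by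
        rw [hb1, Set.inter_comm]
      have hout : E.code x₂ ∉ E.cset x :=
        E.sep_core hx₂.1 hx₂.2 hx₁.1 hb2' hb1'' h
      rw [← hcs] at hin
      exact hout hin
  rcases Set.eq_empty_or_nonempty (E.S.below x \ E.S.below y) with hDx|hDx
  · rcases Set.eq_empty_or_nonempty (E.S.below y \ E.S.below x) with hDy|hDy
    · exfalso
      apply hne
      apply Set.Subset.antisymm
      · exact Set.diff_eq_empty.mp hDx
      · exact Set.diff_eq_empty.mp hDy
    · exact (easy y x hDy (Set.diff_eq_empty.mp hDx)).symm
  · rcases Set.eq_empty_or_nonempty (E.S.below y \ E.S.below x) with hDy|hDy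
    · exact easy x y hDx (Set.diff_eq_empty.mp hDy)
    · exact main x y hDx hDy

/-- continuity estimate at limit levels -/
lemma psi_cont {y : T} (hne : (E.S.below y).Nonempty) {ε : ℝ} (hε : 0 < ε) :
    ∃ x, E.S.lt x y ∧ ∀ z, E.S.lt x z → E.S.lt z y → |E.psi z - E.psi y| < ε := by
  obtain ⟨M, hM⟩ : ∃ M : ℕ, (3:ℝ)⁻¹ ^ (M+1) < ε := by
    obtain ⟨n, hn⟩ := exists_pow_lt_of_lt_one hε (by norm_num : (3:ℝ)⁻¹ < 1)
    refine ⟨n, lt_of_le_of_lt ?_ hn⟩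
    apply pow_le_pow_of_le_one (by norm_num) (by norm_num)
    omega
  -- the set of small-coded predecessors
  set G : Set T := {z | E.S.lt z y ∧ E.code z ≤ M} with hG
  have hGfin : G.Finite := by
    apply Set.Finite.of_finite_image (f := E.code)
    · apply Set.Finite.subset (Set.finite_Iic M)
      rintro n ⟨z, hz, rfl⟩
      exact hz.2
    · intro a ha b hb hab
      exact E.code_inj_below ha.1 hb.1 hab
  -- produce x such that everything in G is ≤ x
  have key : ∃ x, E.S.lt x y ∧ ∀ u ∈ G, u = x ∨ E.S.lt u x := by
    rcases Set.eq_empty_or_nonempty G with hGe|hGne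
    · obtain ⟨x, hx⟩ := hne
      exact ⟨x, hx, fun u hu => by rw [hGe] at hu; exact absurd hu (Set.notMem_empty u)⟩
    · obtain ⟨a, ha, hamax⟩ := Set.Finite.exists_maximalFor E.sig G hGfin hGne
      refine ⟨a, ha.1, ?_⟩
      intro u hu
      rcases E.tri3 hu.1 ha.1 with h|h|h
      · exact Or.inr h
      · exact Or.inl h
      · exfalso
        have hlt := E.sig_lt_of_lt h
        have := hamax hu hlt.le
        exact absurd this (not_le.mpr hlt)
  obtain ⟨x, hxy, hmax⟩ := key
  refine ⟨x, hxy, ?_⟩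
  intro z hxz hzy
  have hsub : E.cset z ⊆ E.cset y := E.cset_mono hzy
  have hdiff : ∀ n ∈ E.cset y \ E.cset z, M < n := by
    rintro n ⟨hny, hnz⟩
    by_contra hle
    obtain ⟨u, huy, hcode⟩ := E.mem_cset.mp hny
    have huG : u ∈ G := ⟨huy, by omega⟩
    have : E.S.lt u z := by
      rcases hmax u huG with rfl|h
      · exact hxz
      · exact E.S.trans h hxz
    exact hnz (E.mem_cset.mpr ⟨u, this, hcode⟩)
  have hdec : E.cset y = E.cset z ∪ (E.cset y \ E.cset z) := by
    rw [Set.union_diff_cancel hsub]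
  have hdisj : Disjoint (E.cset z) (E.cset y \ E.cset z) := Set.disjoint_sdiff_right
  have hTheta : E.psi y = E.psi z + Theta (E.cset y \ E.cset z) := by
    show Theta (E.cset y) = _
    conv_lhs => rw [hdec]
    rw [Theta_union hdisj]
    rfl
  have htail : Theta (E.cset y \ E.cset z) ≤ (3:ℝ)⁻¹^(M+1) :=
    Theta_le_tail hdiff
  have hnn : 0 ≤ Theta (E.cset y \ E.cset z) := Theta_nonneg _
  rw [hTheta]
  rw [abs_sub_comm]
  rw [abs_of_nonneg (by linarith)]
  linarith

lemma psi_ne_of_below_ne {x y : T} (h : E.S.below x ≠ E.S.below y) :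
    E.psi x ≠ E.psi y := by
  intro heq
  exact E.cset_ne_of_below_ne h (Theta_inj heq)

lemma psi_le_one (x : T) : E.psi x ≤ 1 := Theta_le_one _

lemma sig_le_one (x : T) : E.sig x ≤ 1 := sum_wt_le_one _

end Env

/-- construction of an environment from a special decomposition -/
lemma exists_env {T : Type} (S : TreeOrder T)
    (hlev : ∀ α : Ordinal, (S.level α).Countable)
    (A : ℕ → Set T) (hanti : ∀ n, IsAntichain S.lt (A n)) (hcov : (⋃ n, A n) = univ) :
    ∃ E : Env T, E.S = S := by
  -- heights agree on twins
  have height_congr : ∀ x y : T, S.below x = S.below y → S.height x = S.height y := by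
    intro x y h
    have hiff : ∀ z, S.lt z x ↔ S.lt z y := fun z => Set.ext_iff.mp h z
    haveI := S.wellOrdered x
    haveI := S.wellOrdered y
    apply Ordinal.type_eq.mpr
    exact ⟨RelIso.mk (Equiv.subtypeEquivRight hiff) (fun {a b} => Iff.rfl)⟩
  have hclass : ∀ x : T, {y | S.below y = S.below x}.Countable := by
    intro x
    apply (hlev (S.height x)).mono
    intro y hy
    exact height_congr y x hy
  -- choose injections on twin classes
  set u : Set T → T → ℕ := fun s =>
    if h : s.Countable then Classical.choose (Set.countable_iff_exists_injOn.mp h)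
    else fun _ => 0 with hu
  have hu_inj : ∀ s : Set T, s.Countable → Set.InjOn (u s) s := by
    intro s hs
    rw [hu]
    simp only [dif_pos hs]
    exact Classical.choose_spec (Set.countable_iff_exists_injOn.mp hs)
  refine ⟨⟨S, A, hanti, ?_, fun x => u {y | S.below y = S.below x} x, ?_⟩, rfl⟩
  · intro x
    have : x ∈ ⋃ n, A n := by rw [hcov]; trivial
    exact Set.mem_iUnion.mp this
  · intro x y hb hk
    have hseq : {z | S.below z = S.below x} = {z | S.below z = S.below y} := by
      ext z
      simp only [Set.mem_setOf_eq, hb]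
    rw [hseq] at hk
    exact hu_inj {z | S.below z = S.below y} (hclass y)
      (by simp only [Set.mem_setOf_eq, hb] : x ∈ {z | S.below z = S.below y})
      (by simp only [Set.mem_setOf_eq] : y ∈ {z | S.below z = S.below y}) hk


namespace Env

variable {T : Type} (E : Env T)

lemma below_isChain (x : T) : IsChain E.S.lt (E.S.below x) := by
  intro a ha b hb hne
  rcases E.tri3 ha hb with h|h|h
  · exact Or.inl h
  · exact absurd h hne
  · exact Or.inr h

lemma height_lt_omega1 (hcc : ∀ C : Set T, IsChain E.S.lt C → C.Countable) (x : T) :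
    E.S.height x < (Cardinal.aleph 1).ord := by
  rw [Cardinal.lt_ord]
  have h1 : (E.S.below x).Countable := hcc _ (E.below_isChain x)
  haveI h2 : Countable {y // E.S.lt y x} := h1.to_subtype
  have h3 : (E.S.height x).card = (Cardinal.mk {y // E.S.lt y x}) :=
    @Ordinal.card_type _ _ (E.S.wellOrdered x)
  rw [h3]
  exact lt_of_le_of_lt Cardinal.mk_le_aleph0 Cardinal.aleph0_lt_aleph_one

lemma countable_low (hlev : ∀ α : Ordinal, (E.S.level α).Countable)
    {α : Ordinal} (hα : α < (Cardinal.aleph 1).ord) :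
    {x : T | E.S.height x < α}.Countable := by
  have hcard : α.card ≤ Cardinal.aleph0 := by
    rw [Cardinal.lt_ord] at hα
    rwa [← Cardinal.succ_aleph0, Order.lt_succ_iff] at hα
  haveI : Countable (Set.Iio α) := by
    rw [← Cardinal.mk_le_aleph0_iff, Ordinal.mk_Iio_ordinal, ← Cardinal.lift_aleph0.{1,0}]
    exact Cardinal.lift_le.mpr hcard
  have heq : {x : T | E.S.height x < α} = ⋃ β : Set.Iio α, E.S.level β.1 := by
    ext x
    simp only [Set.mem_setOf_eq, Set.mem_iUnion]
    constructor
    · intro h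
      exact ⟨⟨E.S.height x, h⟩, rfl⟩
    · rintro ⟨⟨β, hβ⟩, h⟩
      have : E.S.height x = β := h
      rw [this]
      exact hβ
  rw [heq]
  exact Set.countable_iUnion (fun β => hlev β.1)

lemma height_eq_typein {w z : T} (h : E.S.lt z w) :
    E.S.height z =
      @Ordinal.typein {u // E.S.lt u w} (fun a b => E.S.lt a.1 b.1) (E.S.wellOrdered w) ⟨z, h⟩ := by
  haveI := E.S.wellOrdered w
  haveI := E.S.wellOrdered z
  rw [← Ordinal.type_subrel]
  apply Ordinal.type_eq.mpr
  constructor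
  refine RelIso.mk (Equiv.mk ?_ ?_ ?_ ?_) ?_
  · exact fun u => ⟨⟨u.1, E.S.trans u.2 h⟩, u.2⟩
  · exact fun b => ⟨b.1.1, b.2⟩
  · intro u
    rfl
  · intro b
    apply Subtype.ext
    apply Subtype.ext
    rfl
  · intro a b
    exact Iff.rfl

lemma exists_node_of_lt_height {w : T} {α : Ordinal} (hα : α < E.S.height w) :
    ∃ z : T, E.S.lt z w ∧ E.S.height z = α := by
  haveI := E.S.wellOrdered w
  have hα' : α < Ordinal.type (fun a b : {u // E.S.lt u w} => E.S.lt a.1 b.1) := hα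
  set z := Ordinal.enum (fun a b : {u // E.S.lt u w} => E.S.lt a.1 b.1) ⟨α, hα'⟩ with hz
  refine ⟨z.1, z.2, ?_⟩
  have h1 := E.height_eq_typein z.2
  rw [h1]
  have h2 : (⟨z.1, z.2⟩ : {u // E.S.lt u w}) = z := rfl
  rw [h2, hz]
  exact Ordinal.typein_enum _ _

end Env

end CantorAux

end

/-- For any special Aronszajn tree `T` there is `B ⊆ ℝ` with no Cantor subsets and a
continuous order preserving `ψ : T → B` with `ψ x ≠ ψ y` whenever `x↓ ≠ y↓`;
in particular `ψ` is injective whenever `T` is Hausdorff. -/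
theorem build_continuous_map {T : Type} (S : TreeOrder T)
    (hS : S.IsSpecialAronszajn) :
    ∃ (B : Set ℝ) (ψ : T → ℝ),
      (¬ ∃ C : Set ℝ, C ⊆ B ∧ Nonempty (C ≃ₜ (ℕ → Bool))) ∧
      (∀ x, ψ x ∈ B) ∧ S.TContinuous ψ ∧
      (∀ x y, S.lt x y → ψ x < ψ y) ∧
      (∀ x y, S.below x ≠ S.below y → ψ x ≠ ψ y) ∧
      ((∀ y z : T, S.below y = S.below z → y = z) → Function.Injective ψ) := by
  classical
  obtain ⟨⟨⟨hcard, hlev, hlevtop⟩, hcc⟩, A, hanti, hcov⟩ := hS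
  obtain ⟨E, hES⟩ := CantorAux.exists_env S hlev A hanti hcov
  subst hES
  set Ω := (Cardinal.aleph 1).ord with hΩ
  have hΩlim : Order.IsSuccLimit Ω := Cardinal.isSuccLimit_ord (Cardinal.aleph0_le_aleph 1)
  have hΩpos : (0 : Ordinal) < Ω := hΩlim.pos
  refine ⟨Set.range E.psi, E.psi, ?_, fun x => Set.mem_range_self x, ?_, ?_, ?_, ?_⟩
  · -- no Cantor subset
    rintro ⟨C, hCB, ⟨φ⟩⟩
    haveI hCS : CompactSpace ↥C := φ.symm.compactSpace
    have hCcomp : IsCompact C := isCompact_iff_compactSpace.mpr hCS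
    have hCuncount : ¬ C.Countable := by
      intro h
      haveI h1 : Countable ↥C := h.to_subtype
      have h2 : (Cardinal.mk ↥C) ≤ Cardinal.aleph0 := Cardinal.mk_le_aleph0
      have heq : Cardinal.mk ↥C = Cardinal.mk (ℕ → Bool) := Cardinal.mk_congr φ.toEquiv
      have h3 : Cardinal.mk (ℕ → Bool) = 2 ^ Cardinal.aleph0 := by
        rw [← Cardinal.power_def, Cardinal.mk_bool, Cardinal.mk_nat]
      have h4 := Cardinal.cantor Cardinal.aleph0
      rw [heq, h3] at h2
      exact absurd h2 (not_le.mpr h4)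
    have hsub : ∀ c : ↥C, (c : ℝ) ∈ Set.range E.psi := fun c => hCB c.2
    set xf : ↥C → T := fun c => Classical.choose (hsub c) with hxf
    have hxf_spec : ∀ c : ↥C, E.psi (xf c) = (c : ℝ) := fun c => Classical.choose_spec (hsub c)
    -- heights of chosen nodes are unbounded in ω₁
    have hunb : ∀ α, α < Ω → ∃ c : ↥C, α ≤ E.S.height (xf c) := by
      by_contra h
      push_neg at h
      obtain ⟨α, hα, hall⟩ := h
      have hcnt := E.countable_low hlev hα
      haveI h1 : Countable ↥{x : T | E.S.height x < α} := hcnt.to_subtype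
      have h2 : Function.Injective
          (fun c : ↥C => (⟨xf c, hall c⟩ : ↥{x : T | E.S.height x < α})) := by
        intro a b hab
        have : xf a = xf b := congrArg Subtype.val hab
        apply Subtype.ext
        rw [← hxf_spec a, ← hxf_spec b, this]
      haveI h3 : Countable ↥C := Function.Injective.countable h2
      exact hCuncount (Set.countable_coe_iff.mpr h3)
    -- the invariant
    set InvP : ℝ → Finset ℕ → Prop := fun q G =>
      ∀ α, α < Ω → ∃ (c : ↥C) (w : T), (w = xf c ∨ E.S.lt w (xf c)) ∧
        α ≤ E.S.height w ∧ E.sig w ≤ q ∧ ∀ m ∈ G, m ∈ E.cset (xf c) with hInvP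
    have init : InvP 2 ∅ := by
      intro α hα
      obtain ⟨c, hc⟩ := hunb α hα
      refine ⟨c, xf c, Or.inl rfl, hc, ?_, by simp⟩
      have := E.sig_le_one (xf c)
      linarith
    -- the step
    have step : ∀ (q : ℝ) (G : Finset ℕ), InvP q G → ∃ (q' : ℝ) (G₀ : Finset ℕ),
        q' < q ∧ G₀.sum CantorAux.wt = q' ∧ InvP q' (insert (Encodable.encode G₀) G) := by
      intro q G hinv
      have H : ∀ α, α < Ω → ∃ (c : ↥C) (z : T),
          E.S.lt z (xf c) ∧ E.S.height z = α ∧ E.sig z < q ∧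
          ∀ m ∈ G, m ∈ E.cset (xf c) := by
        intro α hα
        have hsucc : α + 1 < Ω := by
          rw [Ordinal.add_one_eq_succ]
          exact hΩlim.succ_lt hα
        obtain ⟨c, w, hw, hht, hsigw, hmemG⟩ := hinv (α+1) hsucc
        have hαlt : α < E.S.height w := by
          apply lt_of_lt_of_le _ hht
          rw [Ordinal.add_one_eq_succ]
          exact Order.lt_succ α
        obtain ⟨z, hzw, hzh⟩ := E.exists_node_of_lt_height hαlt
        have hzc : E.S.lt z (xf c) := by
          rcases hw with rfl|hw
          · exact hzw
          · exact E.S.trans hzw hw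
        have hsigz : E.sig z < q := lt_of_lt_of_le (E.sig_lt_of_lt hzw) hsigw
        exact ⟨c, z, hzc, hzh, hsigz, hmemG⟩
      choose cc zz h1 h2 h3 h4 using H
      set f : Ordinal → ℕ := fun α => if h : α < Ω then E.code (zz α h) else 0 with hf
      have pig : ∃ n : ℕ, ∀ β, β < Ω → ∃ α, β ≤ α ∧ ∃ h : α < Ω, f α = n := by
        by_contra hno
        push_neg at hno
        choose βf hβlt hβ using hno
        have hsup : (⨆ n, βf n) < Ω := by
          have hι : (Cardinal.mk ℕ) < Cardinal.aleph 1 := by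
            rw [Cardinal.mk_nat]; exact Cardinal.aleph0_lt_aleph_one
          exact Cardinal.iSup_lt_ord_of_isRegular Cardinal.isRegular_aleph_one hι hβlt
        exact hβ (f (⨆ n, βf n)) (⨆ n, βf n) (Ordinal.le_iSup βf _) hsup rfl
      obtain ⟨n₀, hn₀⟩ := pig
      obtain ⟨α₁, hle₁, hlt₁, hfα₁⟩ := hn₀ 0 hΩpos
      refine ⟨E.sig (zz α₁ hlt₁), E.F (zz α₁ hlt₁), h3 α₁ hlt₁, rfl, ?_⟩
      intro β hβ
      obtain ⟨α, hle, hlt, hfα⟩ := hn₀ β hβ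
      have hcode : E.code (zz α hlt) = E.code (zz α₁ hlt₁) := by
        have e1 : f α = E.code (zz α hlt) := dif_pos hlt
        have e2 : f α₁ = E.code (zz α₁ hlt₁) := dif_pos hlt₁
        rw [← e1, ← e2, hfα, hfα₁]
      refine ⟨cc α hlt, zz α hlt, Or.inr (h1 α hlt), ?_, ?_, ?_⟩
      · rw [h2 α hlt]; exact hle
      · exact le_of_eq (E.sig_eq_of_code_eq hcode)
      · intro m hm
        rcases Finset.mem_insert.mp hm with rfl|hm'
        · exact E.mem_cset.mpr ⟨zz α hlt, h1 α hlt, hcode⟩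
        · exact h4 α hlt m hm'
    -- iterate the step
    set St := {p : ℝ × Finset ℕ // InvP p.1 p.2} with hSt
    have step' : ∀ s : St, {t : St // t.1.1 < s.1.1 ∧
        ∃ G₀ : Finset ℕ, G₀.sum CantorAux.wt = t.1.1 ∧
          t.1.2 = insert (Encodable.encode G₀) s.1.2} := by
      intro s
      have h := step s.1.1 s.1.2 s.2
      refine ⟨⟨⟨h.choose, insert (Encodable.encode h.choose_spec.choose) s.1.2⟩,
        h.choose_spec.choose_spec.2.2⟩, h.choose_spec.choose_spec.1,
        h.choose_spec.choose, h.choose_spec.choose_spec.2.1, rfl⟩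
    set seq : ℕ → St := fun k => Nat.rec ⟨⟨2, ∅⟩, init⟩ (fun _ s => (step' s).1) k with hseq
    have hseqsucc : ∀ k, seq (k+1) = (step' (seq k)).1 := fun k => rfl
    have hdec : ∀ k, (seq (k+1)).1.1 < (seq k).1.1 := by
      intro k
      rw [hseqsucc k]
      exact (step' (seq k)).2.1
    have hlink : ∀ k, ∃ G₀ : Finset ℕ, G₀.sum CantorAux.wt = (seq (k+1)).1.1 ∧
        (seq (k+1)).1.2 = insert (Encodable.encode G₀) (seq k).1.2 := by
      intro k
      rw [hseqsucc k]
      exact (step' (seq k)).2.2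
    have hGmono : ∀ k, (seq k).1.2 ⊆ (seq (k+1)).1.2 := by
      intro k
      obtain ⟨G₀, _, heq⟩ := hlink k
      rw [heq]
      exact Finset.subset_insert _ _
    -- the closed sets
    set Z : ℕ → Set ℝ := fun k =>
      {c : ℝ | ∃ hc : c ∈ C, ∀ m ∈ (seq k).1.2, m ∈ E.cset (xf ⟨c, hc⟩)} with hZ
    have hZsubC : ∀ k, Z k ⊆ C := fun k c hc => hc.choose
    have hZnon : ∀ k, (Z k).Nonempty := by
      intro k
      obtain ⟨c, w, _, _, _, hmem⟩ := (seq k).2 0 hΩpos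
      refine ⟨(c : ℝ), c.2, ?_⟩
      intro m hm
      have : (⟨(c : ℝ), c.2⟩ : ↥C) = c := Subtype.ext rfl
      rw [this]
      exact hmem m hm
    have hZdec : ∀ k, Z (k+1) ⊆ Z k := by
      intro k c hc
      obtain ⟨hcC, hmem⟩ := hc
      exact ⟨hcC, fun m hm => hmem m (hGmono k hm)⟩
    have hZclosed : ∀ k, IsClosed (Z k) := by
      intro k
      rw [← isSeqClosed_iff_isClosed]
      intro u c hu hc
      have hcC : c ∈ C := hCcomp.isClosed.mem_of_tendsto hc
        (Filter.Eventually.of_forall (fun n => hZsubC k (hu n)))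
      refine ⟨hcC, ?_⟩
      intro m hm
      obtain ⟨N, hN⟩ := Metric.tendsto_atTop.mp hc ((3:ℝ)⁻¹^(m+1)) (by positivity)
      have hdist : |u N - c| < (3:ℝ)⁻¹^(m+1) := by
        have := hN N le_rfl
        rwa [Real.dist_eq] at this
      obtain ⟨huN, hmemN⟩ := hu N
      have h1 : CantorAux.Theta (E.cset (xf ⟨u N, huN⟩)) = u N := hxf_spec _
      have h2 : CantorAux.Theta (E.cset (xf ⟨c, hcC⟩)) = c := hxf_spec _
      have hclose := CantorAux.mem_iff_of_close (U := E.cset (xf ⟨u N, huN⟩))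
        (V := E.cset (xf ⟨c, hcC⟩)) (m := m) (by rw [h1, h2]; exact hdist)
      exact hclose.mp (hmemN m hm)
    have hZ0 : IsCompact (Z 0) := hCcomp.of_isClosed_subset (hZclosed 0) (hZsubC 0)
    obtain ⟨cstar, hcstar⟩ :=
      IsCompact.nonempty_iInter_of_sequence_nonempty_isCompact_isClosed Z hZdec hZnon hZ0 hZclosed
    have hcstarC : cstar ∈ C := hZsubC 0 (Set.mem_iInter.mp hcstar 0)
    set xs := xf ⟨cstar, hcstarC⟩ with hxs
    have hnodes : ∀ k, ∃ z, E.S.lt z xs ∧ E.sig z = (seq (k+1)).1.1 := by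
      intro k
      obtain ⟨G₀, hsum, heq⟩ := hlink k
      obtain ⟨hc', hall⟩ := Set.mem_iInter.mp hcstar (k+1)
      have hmem : Encodable.encode G₀ ∈ E.cset (xf ⟨cstar, hc'⟩) := by
        apply hall
        rw [heq]
        exact Finset.mem_insert_self _ _
      have hsame : (⟨cstar, hc'⟩ : ↥C) = ⟨cstar, hcstarC⟩ := Subtype.ext rfl
      rw [hsame] at hmem
      obtain ⟨z, hz, hcode⟩ := E.mem_cset.mp hmem
      refine ⟨z, hz, ?_⟩
      have hFz : E.F z = G₀ := Encodable.encode_injective hcode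
      show (E.F z).sum CantorAux.wt = _
      rw [hFz, hsum]
    choose zf hzf1 hzf2 using hnodes
    have hdesc : ∀ k, E.S.lt (zf (k+1)) (zf k) := by
      intro k
      have hlt : E.sig (zf (k+1)) < E.sig (zf k) := by
        rw [hzf2, hzf2]
        exact hdec (k+1)
      rcases E.tri3 (hzf1 (k+1)) (hzf1 k) with h|h|h
      · exact h
      · rw [h] at hlt; exact absurd hlt (lt_irrefl _)
      · have := E.sig_lt_of_lt h
        exact absurd hlt (by linarith)
    have wf : WellFounded (fun a b : {z // E.S.lt z xs} => E.S.lt a.1 b.1) :=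
      (E.S.wellOrdered xs).toIsWellFounded.wf
    set g : ℕ → {z // E.S.lt z xs} := fun k => ⟨zf k, hzf1 k⟩ with hg
    obtain ⟨m, hmem, hmin⟩ := wf.has_min (Set.range g) ⟨g 0, 0, rfl⟩
    obtain ⟨k, hk⟩ := hmem
    exact hmin (g (k+1)) ⟨k+1, rfl⟩ (by rw [← hk]; exact hdesc k)
  · -- continuity
    intro V hV y hy hlim
    obtain ⟨ε, hε, hball⟩ := Metric.isOpen_iff.mp hV _ hy
    have hbne : (E.S.below y).Nonempty := by
      by_contra h
      rw [Set.not_nonempty_iff_eq_empty] at h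
      haveI hie : IsEmpty {z // E.S.lt z y} :=
        ⟨fun z => Set.eq_empty_iff_forall_notMem.mp h z.1 z.2⟩
      have h0 : E.S.height y = 0 :=
        (@Ordinal.type_eq_zero_iff_isEmpty _ _ (E.S.wellOrdered y)).mpr hie
      have := hlim.pos
      rw [h0] at this
      exact lt_irrefl _ this
    obtain ⟨x, hxy, hx⟩ := E.psi_cont hbne hε
    refine ⟨x, hxy, fun z h1 h2 => ?_⟩
    apply hball
    rw [Metric.mem_ball, Real.dist_eq]
    exact hx z h1 h2
  · -- order preserving
    exact fun x y h => E.psi_lt_of_lt h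
  · -- separation
    exact fun x y hb => E.psi_ne_of_below_ne hb
  · -- injectivity under Hausdorffness
    intro hH a b hab
    apply hH
    by_contra hbne
    exact E.psi_ne_of_below_ne hbne hab
end

section
/- Let T be an ω₁-tree and U ⊆ T an open subset of T in the tree topology. Then U^p is open in the tree topology; in fact, for every x ∈ U^p one has x↓ ∩ U ⊆ U^p. -/
/-- If `U` is open in the tree topology of an `ω₁`-tree, then `U^p` is open;
in fact, for every `x ∈ U^p`, `x↓ ∩ U ⊆ U^p`. -/
theorem prune_open {T : Type} (S : TreeOrder T) (hT : S.IsOmega1Tree)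
    (U : Set T) (hU : S.TreeOpen U) :
    S.TreeOpen (S.prune U) ∧ ∀ x ∈ S.prune U, S.below x ∩ U ⊆ S.prune U := by
  have h2 : ∀ x ∈ S.prune U, S.below x ∩ U ⊆ S.prune U := by
    intro x hx y hy
    refine ⟨hy.2, ?_⟩
    intro C hC
    obtain ⟨β, hβ⟩ := hx.2 C hC
    refine ⟨β, ?_, hβ.2⟩
    obtain ⟨z, hz, hzβ⟩ := hβ.1
    exact ⟨z, ⟨S.trans hy.1 hz.1, hz.2⟩, hzβ⟩
  refine ⟨?_, h2⟩
  intro y hy hlim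
  obtain ⟨x, hxy, hint⟩ := hU y hy.1 hlim
  exact ⟨x, hxy, fun z hxz hzy => h2 y hy ⟨hzy, hint z hxz hzy⟩⟩
end

section
/- Let T be an ω₁-tree and U ⊆ T an open subset of T in the tree topology. Then (U^p)^p = U^p. -/
namespace PruneAux

open Ordinal Cardinal Set


theorem kappa_isLimit : Order.IsSuccLimit (Cardinal.aleph 1).ord :=
  Cardinal.isSuccLimit_ord (Cardinal.aleph0_le_aleph 1)

theorem univ_club : IsClubIn Set.univ (Cardinal.aleph 1).ord :=
  ⟨fun _ _ _ _ => Set.mem_univ _,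
   fun α hα => ⟨Order.succ α, Set.mem_univ _, Order.lt_succ α, kappa_isLimit.succ_lt hα⟩⟩

theorem exists_seq (P : ℕ → Ordinal.{0} → Ordinal.{0} → Prop) (α₀ : Ordinal.{0}) (h0 : α₀ < (Cardinal.aleph 1).ord)
    (h : ∀ n α, α < (Cardinal.aleph 1).ord → ∃ β, α < β ∧ β < (Cardinal.aleph 1).ord ∧ P n α β) :
    ∃ g : ℕ → Ordinal, g 0 = α₀ ∧ (∀ n, g n < g (n + 1)) ∧ (∀ n, g n < (Cardinal.aleph 1).ord) ∧
      ∀ n, P n (g n) (g (n + 1)) := by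
  let f : ℕ → {o : Ordinal // o < (Cardinal.aleph 1).ord} := fun n =>
    Nat.rec ⟨α₀, h0⟩ (fun n p => ⟨(h n p.1 p.2).choose, (h n p.1 p.2).choose_spec.2.1⟩) n
  exact ⟨fun n => (f n).1, rfl, fun n => (h n (f n).1 (f n).2).choose_spec.1,
    fun n => (f n).2, fun n => (h n (f n).1 (f n).2).choose_spec.2.2⟩

theorem sup_seq (g : ℕ → Ordinal.{0}) (hmono : ∀ n, g n < g (n + 1)) (hlt : ∀ n, g n < (Cardinal.aleph 1).ord) :
    (⨆ n, g n) < (Cardinal.aleph 1).ord ∧ (∀ n, g n < ⨆ n, g n) ∧ (⨆ n, g n) ≠ 0 ∧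
      (∀ β < ⨆ n, g n, ∃ n, β < g n) := by
  have h1 : (⨆ n, g n) < (Cardinal.aleph 1).ord := by
    refine Ordinal.iSup_lt_ord ?_ hlt
    rw [Cardinal.isRegular_aleph_one.cof_eq]
    exact lt_of_le_of_lt Cardinal.mk_le_aleph0 Cardinal.aleph0_lt_aleph_one
  have h2 : ∀ n, g n < ⨆ n, g n :=
    fun n => lt_of_lt_of_le (hmono n) (Ordinal.le_iSup g (n + 1))
  exact ⟨h1, h2, ((zero_le : (0 : Ordinal) ≤ _).trans_lt (h2 0)).ne',
    fun β hβ => Ordinal.lt_iSup_iff.mp hβ⟩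

theorem club_iInter {ι : Type} [Countable ι] (D : ι → Set Ordinal)
    (h : ∀ i, IsClubIn (D i) (Cardinal.aleph 1).ord) : IsClubIn (⋂ i, D i) (Cardinal.aleph 1).ord := by
  constructor
  · intro α hα hα0 happ
    refine Set.mem_iInter.mpr fun i => (h i).1 α hα hα0 fun β hβ => ?_
    obtain ⟨γ, hγ, h1, h2⟩ := happ β hβ
    exact ⟨γ, Set.mem_iInter.mp hγ i, h1, h2⟩
  · intro α hα
    cases isEmpty_or_nonempty ι with
    | inl hemp =>
      exact ⟨Order.succ α, by simp [Set.iInter_of_empty], Order.lt_succ α,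
        kappa_isLimit.succ_lt hα⟩
    | inr hne =>
      obtain ⟨e, he⟩ := exists_surjective_nat ι
      obtain ⟨g, hg0, hmono, hltk, hP⟩ := exists_seq
        (fun n _ β => β ∈ D (e n.unpair.1)) α hα (fun n a ha => by
          obtain ⟨β, hβD, hab, hbk⟩ := (h (e n.unpair.1)).2 a ha
          exact ⟨β, hab, hbk, hβD⟩)
      obtain ⟨hsk, hlts, hs0, happrox⟩ := sup_seq g hmono hltk
      have hsm : StrictMono g := strictMono_nat_of_lt_succ hmono
      refine ⟨⨆ n, g n, Set.mem_iInter.mpr fun i => ?_, hg0 ▸ hlts 0, hsk⟩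
      apply (h i).1 _ hsk hs0
      intro β hβ
      obtain ⟨n, hn⟩ := happrox β hβ
      obtain ⟨m, hm⟩ := he i
      have key : g (Nat.pair m n + 1) ∈ D i := by
        have := hP (Nat.pair m n)
        rwa [Nat.unpair_pair, hm] at this
      exact ⟨g (Nat.pair m n + 1), key,
        hn.trans_le (hsm.monotone ((Nat.right_le_pair m n).trans (Nat.le_succ _))),
        hlts _⟩

theorem club_inter {C₁ C₂ : Set Ordinal} (h1 : IsClubIn C₁ (Cardinal.aleph 1).ord) (h2 : IsClubIn C₂ (Cardinal.aleph 1).ord) :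
    IsClubIn (C₁ ∩ C₂) (Cardinal.aleph 1).ord := by
  have heq : (⋂ b : Bool, (bif b then C₁ else C₂)) = C₁ ∩ C₂ := by
    ext x
    simp only [Set.mem_iInter, Bool.forall_bool, Bool.cond_false, Bool.cond_true,
      Set.mem_inter_iff]
    exact and_comm
  rw [← heq]
  exact club_iInter _ (fun b => by cases b <;> [exact h2; exact h1])

theorem club_limitPoints {C : Set Ordinal} (h : IsClubIn C (Cardinal.aleph 1).ord) :
    IsClubIn {α | α < (Cardinal.aleph 1).ord ∧ α ≠ 0 ∧ ∀ β < α, ∃ γ ∈ C, β < γ ∧ γ < α} (Cardinal.aleph 1).ord := by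
  constructor
  · intro α hα hα0 happ
    refine ⟨hα, hα0, fun β hβ => ?_⟩
    obtain ⟨γ, hγG, h1, h2⟩ := happ β hβ
    exact ⟨γ, h.1 γ hγG.1 hγG.2.1 hγG.2.2, h1, h2⟩
  · intro α hα
    obtain ⟨g, hg0, hmono, hltk, hP⟩ := exists_seq (fun _ _ β => β ∈ C) α hα
      (fun n a ha => by
        obtain ⟨β, hβC, h1', h2'⟩ := h.2 a ha
        exact ⟨β, h1', h2', hβC⟩)
    obtain ⟨hsk, hlts, hs0, happrox⟩ := sup_seq g hmono hltk
    refine ⟨⨆ n, g n, ⟨hsk, hs0, fun β hβ => ?_⟩, hg0 ▸ hlts 0, hsk⟩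
    obtain ⟨n, hn⟩ := happrox β hβ
    exact ⟨g (n + 1), hP n, hn.trans (hmono n), hlts (n + 1)⟩

theorem not_stat {A : Set Ordinal} (h : ¬ IsStationaryIn A (Cardinal.aleph 1).ord) :
    ∃ C, IsClubIn C (Cardinal.aleph 1).ord ∧ ∀ o ∈ A, o ∉ C := by
  rw [IsStationaryIn] at h
  push_neg at h
  obtain ⟨C, hC, hint⟩ := h
  rw [← Set.not_nonempty_iff_eq_empty] at hint
  rw [Set.not_nonempty_iff_eq_empty] at hint
  exact ⟨C, hC, fun o hA hC' => Set.eq_empty_iff_forall_notMem.mp hint o ⟨hA, hC'⟩⟩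

variable {T : Type} (S : TreeOrder T)

theorem height_eq_typein {y a : T} (h : S.lt a y) :
    S.height a = @Ordinal.typein {z // S.lt z y} (fun p q => S.lt p.1 q.1)
      (S.wellOrdered y) ⟨a, h⟩ := by
  letI := S.wellOrdered y
  letI := S.wellOrdered a
  show Ordinal.type (fun p q : {z // S.lt z a} => S.lt p.1 q.1) = _
  rw [← Ordinal.type_subrel]
  exact Ordinal.type_eq.mpr ⟨⟨⟨fun p => ⟨⟨p.1, S.trans p.2 h⟩, p.2⟩,
    fun q => ⟨q.1.1, q.2⟩, fun p => rfl, fun q => rfl⟩, Iff.rfl⟩⟩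

theorem height_lt {a b : T} (h : S.lt a b) : S.height a < S.height b := by
  letI := S.wellOrdered b
  rw [height_eq_typein S h]
  exact Ordinal.typein_lt_type _ _

theorem lt_of_height_lt {a b y : T} (ha : S.lt a y) (hb : S.lt b y)
    (h : S.height a < S.height b) : S.lt a b := by
  letI := S.wellOrdered y
  rw [height_eq_typein S ha, height_eq_typein S hb] at h
  exact (Ordinal.typein_lt_typein (fun p q : {z // S.lt z y} => S.lt p.1 q.1)).mp h

theorem exists_height_eq {y : T} {β : Ordinal} (h : β < S.height y) :
    ∃ a, S.lt a y ∧ S.height a = β := by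
  letI := S.wellOrdered y
  have h' : β < Ordinal.type (fun p q : {z // S.lt z y} => S.lt p.1 q.1) := h
  obtain ⟨p, hp⟩ := Ordinal.typein_surj _ h'
  exact ⟨p.1, p.2, (height_eq_typein S p.2).trans hp⟩

theorem height_lt_kappa (hT : S.IsOmega1Tree) (x : T) : S.height x < (Cardinal.aleph 1).ord := by
  rcases lt_trichotomy (S.height x) (Cardinal.aleph 1).ord with h | h | h
  · exact h
  · have hx : x ∈ S.level (Cardinal.aleph 1).ord := h
    rw [hT.2.2] at hx
    exact hx.elim
  · obtain ⟨a, _, hae⟩ := exists_height_eq S h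
    have hx : a ∈ S.level (Cardinal.aleph 1).ord := hae
    rw [hT.2.2] at hx
    exact hx.elim

theorem countable_small (hT : S.IsOmega1Tree) {α : Ordinal} (hα : α < (Cardinal.aleph 1).ord) :
    {y : T | S.height y < α}.Countable := by
  have h2 : α.card ≤ ℵ₀ := by
    have := Cardinal.lt_ord.mp hα
    rwa [← Cardinal.succ_aleph0, Order.lt_succ_iff] at this
  have h1 : (Set.Iio α).Countable := by
    rw [Cardinal.countable_iff_lt_aleph_one, Ordinal.mk_Iio_ordinal]
    calc Cardinal.lift.{1} α.card ≤ Cardinal.lift.{1} ℵ₀ := Cardinal.lift_le.mpr h2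
      _ = ℵ₀ := Cardinal.lift_aleph0
      _ < ℵ₁ := Cardinal.aleph0_lt_aleph_one
  have heq : {y : T | S.height y < α} = ⋃ β ∈ Set.Iio α, S.level β := by
    ext y
    simp only [Set.mem_setOf_eq, Set.mem_iUnion, Set.mem_Iio, TreeOrder.level]
    exact ⟨fun h => ⟨S.height y, h, rfl⟩, fun ⟨β, hβ, hb⟩ => hb ▸ hβ⟩
  rw [heq]
  exact h1.biUnion (fun β _ => hT.2.1 β)

end PruneAux

/-- If `U` is open in the tree topology of an `ω₁`-tree, then `(U^p)^p = U^p`. -/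
theorem prune_idempotent {T : Type} (S : TreeOrder T) (hT : S.IsOmega1Tree)
    (U : Set T) (hU : S.TreeOpen U) :
    S.prune (S.prune U) = S.prune U := by
  apply Set.Subset.antisymm
  · intro x hx
    exact hx.1
  intro x hx
  obtain ⟨hxU, hst⟩ := hx
  refine ⟨⟨hxU, hst⟩, ?_⟩
  by_contra hns
  obtain ⟨C₀, hC₀, hC₀dis⟩ := PruneAux.not_stat hns
  set B : Set T := {y | (S.lt x y ∧ y ∈ U) ∧ ¬ S.TStationary (S.above y ∩ U)} with hBdef
  have hch : ∀ y : T, ∃ D, IsClubIn D (Cardinal.aleph 1).ord ∧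
      (y ∈ B → ∀ o ∈ S.height '' (S.above y ∩ U), o ∉ D) := by
    intro y
    by_cases hy : y ∈ B
    · obtain ⟨D, hD, hdis⟩ := PruneAux.not_stat hy.2
      exact ⟨D, hD, fun _ => hdis⟩
    · exact ⟨Set.univ, PruneAux.univ_club, fun h => absurd h hy⟩
  choose Cf hCf hCdis using hch
  set E : Set Ordinal := {α | ∀ y ∈ B, S.height y < α → α ∈ Cf y} with hEdef
  have hEclub : IsClubIn E (Cardinal.aleph 1).ord := by
    constructor
    · intro α hak hα0 happ
      intro y hyB hyα
      apply (hCf y).1 α hak hα0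
      intro β hβ
      obtain ⟨γ, hγE, h1, h2⟩ := happ (max β (S.height y)) (max_lt hβ hyα)
      exact ⟨γ, hγE y hyB ((le_max_right _ _).trans_lt h1), (le_max_left β _).trans_lt h1, h2⟩
    · intro α hα
      obtain ⟨g, hg0, hmono, hltk, hP⟩ := PruneAux.exists_seq
        (fun _ a β => ∀ y ∈ B, S.height y < a → β ∈ Cf y) α hα (by
          intro n a ha
          have hscnt : {y : T | y ∈ B ∧ S.height y < a}.Countable :=
            (PruneAux.countable_small S hT ha).mono (fun y hy => hy.2)
          haveI := hscnt.to_subtype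
          have hclub := PruneAux.club_iInter
            (fun y : {y : T | y ∈ B ∧ S.height y < a} => Cf y.1) (fun y => hCf y.1)
          obtain ⟨β, hβmem, h1, h2⟩ := hclub.2 a ha
          exact ⟨β, h1, h2, fun y hyB hya => Set.mem_iInter.mp hβmem ⟨y, hyB, hya⟩⟩)
      obtain ⟨hsk, hlts, hs0, happrox⟩ := PruneAux.sup_seq g hmono hltk
      have hsm : StrictMono g := strictMono_nat_of_lt_succ hmono
      refine ⟨⨆ n, g n, ?_, hg0 ▸ hlts 0, hsk⟩
      intro y hyB hyσ
      obtain ⟨n, hn⟩ := happrox _ hyσ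
      apply (hCf y).1 _ hsk hs0
      intro β hβ
      obtain ⟨m, hm⟩ := happrox β hβ
      refine ⟨g (max n m + 1), hP (max n m) y hyB (hn.trans_le (hsm.monotone (le_max_left n m))),
        hm.trans_le (hsm.monotone ((le_max_right n m).trans (Nat.le_succ _))), hlts _⟩
  have hF : IsClubIn (E ∩ C₀) (Cardinal.aleph 1).ord := PruneAux.club_inter hEclub hC₀
  have hG := PruneAux.club_limitPoints hF
  obtain ⟨o, ⟨y, hyA, rfl⟩, hoG⟩ := hst _ hG
  have hαF : S.height y ∈ E ∩ C₀ := hF.1 _ hoG.1 hoG.2.1 hoG.2.2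
  have hyB : y ∈ B := by
    refine ⟨⟨hyA.1, hyA.2⟩, fun hstat => ?_⟩
    exact hC₀dis _ ⟨y, ⟨hyA.1, ⟨hyA.2, hstat⟩⟩, rfl⟩ hαF.2
  have hlim : Order.IsSuccLimit (S.height y) := by
    rw [Ordinal.isSuccLimit_iff, Order.isSuccPrelimit_iff_succ_lt]
    refine ⟨hoG.2.1, fun a ha => ?_⟩
    obtain ⟨γ, _, h1, h2⟩ := hoG.2.2 a ha
    exact lt_of_le_of_lt (Order.succ_le_of_lt h1) h2
  obtain ⟨z, hzy, hseg⟩ := hU y hyA.2 hlim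
  have hzα : S.height z < S.height y := PruneAux.height_lt S hzy
  have hxα : S.height x < S.height y := PruneAux.height_lt S hyA.1
  obtain ⟨β, hβF, hβ1, hβ2⟩ := hoG.2.2 (max (S.height z) (S.height x)) (max_lt hzα hxα)
  obtain ⟨w, hwy, hwβ⟩ := PruneAux.exists_height_eq S hβ2
  have hzw : S.lt z w := PruneAux.lt_of_height_lt S hzy hwy
    (by rw [hwβ]; exact (le_max_left _ _).trans_lt hβ1)
  have hxw : S.lt x w := PruneAux.lt_of_height_lt S hyA.1 hwy
    (by rw [hwβ]; exact (le_max_right _ _).trans_lt hβ1)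
  have hwU : w ∈ U := hseg w hzw hwy
  have hwB : w ∈ B := by
    refine ⟨⟨hxw, hwU⟩, fun hstat => ?_⟩
    refine hC₀dis _ ⟨w, ⟨hxw, ⟨hwU, hstat⟩⟩, rfl⟩ ?_
    rw [hwβ]
    exact hβF.2
  have hαCw : S.height y ∈ Cf w := hαF.1 w hwB (by rw [hwβ]; exact hβ2)
  exact hCdis w hwB _ ⟨y, ⟨hwy, hyA.2⟩, rfl⟩ hαCw
end

section
/- Let T be an ω₁-tree, A ⊆ T a set which is discrete in the tree topology, and U ⊆ T a stationary open set. Then the set S = {α < ω₁ : U ∩ L_α(T) ≠ ∅ and U ∩ L_α(T) ⊆ A} is discrete in the ordinal topology on ω₁ (hence non-stationary), and consequently U \ A is stationary. -/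
-- auxiliary lemmas

namespace TreeOrder
variable {T : Type} (S : TreeOrder T)

lemma height_eq_typein (x : T) (a : {y : T // S.lt y x}) :
    S.height a.1 = @Ordinal.typein _ (fun a b : {y : T // S.lt y x} => S.lt a.1 b.1)
      (S.wellOrdered x) a := by
  letI := S.wellOrdered x
  letI := S.wellOrdered a.1
  rw [← Ordinal.type_subrel]
  unfold TreeOrder.height
  rw [Ordinal.type_eq]
  exact ⟨⟨⟨fun w => ⟨⟨w.1, S.trans w.2 a.2⟩, w.2⟩, fun b => ⟨b.1.1, b.2⟩,
    fun w => rfl, fun b => rfl⟩, Iff.rfl⟩⟩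

lemma height_lt_of_lt {z x : T} (h : S.lt z x) : S.height z < S.height x := by
  letI := S.wellOrdered x
  have := S.height_eq_typein x ⟨z, h⟩
  rw [this]
  exact Ordinal.typein_lt_type _ _

lemma exists_of_lt_height {x : T} {γ : Ordinal} (h : γ < S.height x) :
    ∃ z, S.lt z x ∧ S.height z = γ := by
  letI := S.wellOrdered x
  obtain ⟨a, ha⟩ := Ordinal.typein_surj _ h
  exact ⟨a.1, a.2, (S.height_eq_typein x a).trans ha⟩

end TreeOrder

set_option linter.deprecated false in
lemma aux_seqsup (s : Ordinal.{0} → Ordinal.{0})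
    (hs : ∀ δ, δ < (Cardinal.aleph 1).ord → δ < s δ ∧ s δ < (Cardinal.aleph 1).ord)
    {α : Ordinal.{0}} (hα : α < (Cardinal.aleph 1).ord) :
    ∃ β, α < β ∧ β < (Cardinal.aleph 1).ord ∧
      ∀ δ < β, ∃ γ, δ < γ ∧ γ < β ∧ s γ < β := by
  set κ := (Cardinal.aleph 1).ord
  let f : ℕ → Ordinal := fun n => s^[n] α
  have hκ : ∀ n, f n < κ := by
    intro n
    induction n with
    | zero => exact hα
    | succ n ih =>
      show s^[n+1] α < κ
      rw [Function.iterate_succ_apply']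
      exact (hs _ ih).2
  have hlt : ∀ n, f n < f (n + 1) := by
    intro n
    show s^[n] α < s^[n+1] α
    rw [Function.iterate_succ_apply']
    exact (hs _ (hκ n)).1
  refine ⟨⨆ i, f i, ?_, ?_, ?_⟩
  · exact lt_of_lt_of_le (hlt 0) (Ordinal.le_iSup f 1)
  · refine Ordinal.iSup_lt_ord ?_ hκ
    rw [Cardinal.mk_nat, Cardinal.isRegular_aleph_one.cof_eq]
    exact Cardinal.aleph0_lt_aleph_one
  · intro δ hδ
    obtain ⟨n, hn⟩ := Ordinal.lt_iSup_iff.1 hδ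
    refine ⟨f n, hn, lt_of_lt_of_le (hlt n) (Ordinal.le_iSup f (n+1)), ?_⟩
    have : s (f n) = f (n + 1) := (Function.iterate_succ_apply' s n α).symm
    rw [this]
    exact lt_of_lt_of_le (hlt (n+1)) (Ordinal.le_iSup f (n+2))

lemma aux_club_inter {C D : Set Ordinal.{0}}
    (hC : IsClubIn C (Cardinal.aleph 1).ord) (hD : IsClubIn D (Cardinal.aleph 1).ord) :
    IsClubIn (C ∩ D) (Cardinal.aleph 1).ord := by
  set κ := (Cardinal.aleph 1).ord with hκdef
  constructor
  · intro α hα h0 hlim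
    constructor
    · exact hC.1 α hα h0 (fun β hβ => by
        obtain ⟨γ, hγ, h1, h2⟩ := hlim β hβ; exact ⟨γ, hγ.1, h1, h2⟩)
    · exact hD.1 α hα h0 (fun β hβ => by
        obtain ⟨γ, hγ, h1, h2⟩ := hlim β hβ; exact ⟨γ, hγ.2, h1, h2⟩)
  · intro α hα
    have hstep : ∀ δ : Ordinal, ∃ e, δ < e ∧ (δ < κ → e < κ ∧
        (∃ c ∈ C, δ < c ∧ c ≤ e) ∧ (∃ d ∈ D, δ < d ∧ d ≤ e)) := by
      intro δ
      by_cases h : δ < κ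
      · obtain ⟨c, hc, hc1, hc2⟩ := hC.2 δ h
        obtain ⟨d, hd, hd1, hd2⟩ := hD.2 c hc2
        exact ⟨d, lt_trans hc1 hd1, fun _ =>
          ⟨hd2, ⟨c, hc, hc1, le_of_lt hd1⟩, ⟨d, hd, lt_trans hc1 hd1, le_rfl⟩⟩⟩
      · exact ⟨δ + 1, lt_add_one δ, fun h' => absurd h' h⟩
    choose s hs1 hs2 using hstep
    obtain ⟨β, hαβ, hβκ, hβ⟩ := aux_seqsup s (fun δ h => ⟨hs1 δ, (hs2 δ h).1⟩) hα
    have hβ0 : β ≠ 0 := by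
      intro h; rw [h] at hαβ; exact absurd hαβ (not_lt.2 (zero_le : (0:Ordinal) ≤ α))
    have hβC : β ∈ C := by
      refine hC.1 β hβκ hβ0 ?_
      intro δ hδ
      obtain ⟨γ, hδγ, hγβ, hsγ⟩ := hβ δ hδ
      obtain ⟨_, ⟨c, hc, hγc, hce⟩, _⟩ := hs2 γ (lt_trans hγβ hβκ)
      exact ⟨c, hc, lt_trans hδγ hγc, lt_of_le_of_lt hce hsγ⟩
    have hβD : β ∈ D := by
      refine hD.1 β hβκ hβ0 ?_
      intro δ hδ
      obtain ⟨γ, hδγ, hγβ, hsγ⟩ := hβ δ hδ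
      obtain ⟨_, _, ⟨d, hd, hγd, hde⟩⟩ := hs2 γ (lt_trans hγβ hβκ)
      exact ⟨d, hd, lt_trans hδγ hγd, lt_of_le_of_lt hde hsγ⟩
    exact ⟨β, ⟨hβC, hβD⟩, hαβ, hβκ⟩

lemma aux_discrete_club (S0 : Set Ordinal.{0}) (hsub : S0 ⊆ Set.Iio (Cardinal.aleph 1).ord)
    (hdis : ∀ α ∈ S0, 0 < α → ∃ β < α, ∀ γ, β < γ → γ < α → γ ∉ S0) :
    ∃ C₀ : Set Ordinal.{0}, IsClubIn C₀ (Cardinal.aleph 1).ord ∧ ∀ α ∈ S0, α ∉ C₀ := by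
  set κ := (Cardinal.aleph 1).ord with hκdef
  have hκlim : Order.IsSuccLimit κ := Cardinal.isSuccLimit_ord (Cardinal.aleph0_le_aleph 1)
  classical
  let nxt : Ordinal → Ordinal := fun δ =>
    if h : (S0 ∩ Set.Ioi δ).Nonempty then wellFounded_lt.min _ h else δ + 1
  have hn1 : ∀ δ, δ < nxt δ := by
    intro δ
    by_cases h : (S0 ∩ Set.Ioi δ).Nonempty
    · have := wellFounded_lt.min_mem _ h
      simp only [nxt, dif_pos h]
      exact this.2
    · simp only [nxt, dif_neg h]
      exact lt_add_one δ
  have hn2 : ∀ δ < κ, nxt δ < κ := by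
    intro δ hδ
    by_cases h : (S0 ∩ Set.Ioi δ).Nonempty
    · have := wellFounded_lt.min_mem _ h
      simp only [nxt, dif_pos h]
      exact hsub this.1
    · simp only [nxt, dif_neg h]
      exact hκlim.succ_lt hδ
  have hnmem : ∀ δ, (S0 ∩ Set.Ioi δ).Nonempty → nxt δ ∈ S0 ∩ Set.Ioi δ := by
    intro δ h
    simp only [nxt, dif_pos h]
    exact wellFounded_lt.min_mem _ h
  have hNXT : ∀ δ δ', δ < δ' → nxt δ ≤ nxt δ' ∨ nxt δ ≤ δ' := by
    intro δ δ' hδ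
    by_cases h : (S0 ∩ Set.Ioi δ).Nonempty
    · by_cases h' : (S0 ∩ Set.Ioi δ').Nonempty
      · have hm := hnmem δ' h'
        left
        simp only [nxt, dif_pos h]
        exact not_lt.1 (wellFounded_lt.not_lt_min (S0 ∩ Set.Ioi δ) ⟨hm.1, lt_trans hδ hm.2⟩)
      · have hm := hnmem δ h
        right
        by_contra hc
        push_neg at hc
        exact h' ⟨nxt δ, hm.1, hc⟩
    · right
      simp only [nxt, dif_neg h]
      exact Order.add_one_le_of_lt hδ
  refine ⟨{α | 0 < α ∧ α < κ ∧ ∀ δ < α, nxt δ < α}, ⟨?_, ?_⟩, ?_⟩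
  · -- closed
    intro α hα h0 hlim
    refine ⟨pos_iff_ne_zero.2 h0, hα, ?_⟩
    intro δ hδ
    obtain ⟨γ, hγ, h1, h2⟩ := hlim δ hδ
    exact lt_trans (hγ.2.2 δ h1) h2
  · -- unbounded
    intro α hα
    obtain ⟨β, hαβ, hβκ, hβ⟩ := aux_seqsup nxt (fun δ h => ⟨hn1 δ, hn2 δ h⟩) hα
    refine ⟨β, ⟨lt_of_le_of_lt (zero_le : (0:Ordinal) ≤ α) hαβ, hβκ, ?_⟩, hαβ, hβκ⟩
    intro δ hδ
    obtain ⟨γ, hδγ, hγβ, hsγ⟩ := hβ δ hδ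
    rcases hNXT δ γ hδγ with h | h
    · exact lt_of_le_of_lt h hsγ
    · exact lt_of_le_of_lt h hγβ
  · -- disjoint
    rintro α hαS ⟨h0, hκα, hcl⟩
    obtain ⟨β, hβα, hβ⟩ := hdis α hαS h0
    have hne : (S0 ∩ Set.Ioi β).Nonempty := ⟨α, hαS, hβα⟩
    have hm := hnmem β hne
    exact hβ (nxt β) hm.2 (hcl β hβα) hm.1

/-- If `A ⊆ T` is discrete in the tree topology and `U` is a stationary open set, then
`S₀ = {α < ω₁ : U ∩ L_α ≠ ∅ ∧ U ∩ L_α ⊆ A}` is discrete in the ordinal (order) topology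
(hence non-stationary), and consequently `U \ A` is stationary. -/
theorem stationary_minus_discrete {T : Type} (S : TreeOrder T) (hT : S.IsOmega1Tree)
    (A : Set T) (hA : S.TDiscrete A)
    (U : Set T) (hUopen : S.TreeOpen U) (hUstat : S.TStationary U) :
    (∀ α ∈ {α : Ordinal | α < (Cardinal.aleph 1).ord ∧ (U ∩ S.level α).Nonempty ∧
        U ∩ S.level α ⊆ A},
      ∃ V : Set Ordinal, IsOpen V ∧
        V ∩ {α : Ordinal | α < (Cardinal.aleph 1).ord ∧ (U ∩ S.level α).Nonempty ∧
          U ∩ S.level α ⊆ A} = {α}) ∧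
    ¬ IsStationaryIn {α : Ordinal | α < (Cardinal.aleph 1).ord ∧ (U ∩ S.level α).Nonempty ∧
        U ∩ S.level α ⊆ A} (Cardinal.aleph 1).ord ∧
    S.TStationary (U \ A) := by
  classical
  set κ := (Cardinal.aleph 1).ord with hκdef
  set S0 : Set Ordinal := {α : Ordinal | α < κ ∧ (U ∩ S.level α).Nonempty ∧
    U ∩ S.level α ⊆ A} with hS0def
  have hLT : ∀ x : T, S.height x < κ := by
    intro x
    by_contra h
    push_neg at h
    rcases eq_or_lt_of_le h with he | hl
    · have hx : x ∈ S.level κ := he.symm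
      rw [hT.2.2] at hx
      exact hx
    · obtain ⟨z, _, hz⟩ := S.exists_of_lt_height hl
      have hx : z ∈ S.level κ := hz
      rw [hT.2.2] at hx
      exact hx
  have KEY : ∀ α ∈ S0, 0 < α → ∃ β < α, ∀ γ, β < γ → γ < α → γ ∉ S0 := by
    rintro α ⟨hακ, ⟨x, hxU, hxl⟩, hsubA⟩ hpos
    have hxh : S.height x = α := hxl
    rcases Ordinal.zero_or_succ_or_isSuccLimit α with h0 | ⟨β, hβ⟩ | hlim
    · exact absurd h0 (ne_of_gt hpos)
    · refine ⟨β, ?_, ?_⟩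
      · rw [← hβ]; exact Order.lt_succ β
      · intro γ h1 h2 _
        rw [← hβ, Order.lt_succ_iff] at h2
        exact absurd h2 (not_le.2 h1)
    · have hxA : x ∈ A := hsubA ⟨hxU, hxl⟩
      have hlim' : Order.IsSuccLimit (S.height x) := by rw [hxh]; exact hlim
      obtain ⟨p, hp, hpU⟩ := hUopen x hxU hlim'
      obtain ⟨W, hWopen, hxW, hWA⟩ := hA x hxA
      obtain ⟨p', hp', hpW⟩ := hWopen x hxW hlim'
      refine ⟨max (S.height p) (S.height p'), ?_, ?_⟩
      · exact max_lt (hxh ▸ S.height_lt_of_lt hp) (hxh ▸ S.height_lt_of_lt hp')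
      · intro γ h1 h2 hγS
        obtain ⟨hγκ, ⟨y, hyU, hyl⟩, hsubγ⟩ := hγS
        have hγx : γ < S.height x := by rw [hxh]; exact h2
        obtain ⟨z, hzx, hzh⟩ := S.exists_of_lt_height hγx
        have tri : ∀ u v : {y : T // S.lt y x}, S.lt u.1 v.1 ∨ u.1 = v.1 ∨ S.lt v.1 u.1 := by
          intro u v
          haveI := S.wellOrdered x
          rcases trichotomous (r := fun a b : {y : T // S.lt y x} => S.lt a.1 b.1) u v
            with h | h | h
          · exact Or.inl h
          · exact Or.inr (Or.inl (congrArg Subtype.val h))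
          · exact Or.inr (Or.inr h)
        have hbz : ∀ q : T, (hq : S.lt q x) → S.height q ≤ max (S.height p) (S.height p') →
            S.lt q z := by
          intro q hq hqh
          rcases tri ⟨q, hq⟩ ⟨z, hzx⟩ with h | h | h
          · exact h
          · exfalso
            have hq2 : q = z := h
            have hq' : S.height q = γ := by rw [hq2]; exact hzh
            rw [hq'] at hqh
            exact absurd h1 (not_lt.2 hqh)
          · exfalso
            have := S.height_lt_of_lt h
            rw [hzh] at this
            exact absurd (lt_trans this (lt_of_le_of_lt hqh h1)) (lt_irrefl γ)
        have hpz : S.lt p z := hbz p hp (le_max_left _ _)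
        have hp'z : S.lt p' z := hbz p' hp' (le_max_right _ _)
        have hzU : z ∈ U := hpU z hpz hzx
        have hzW : z ∈ W := hpW z hp'z hzx
        have hzA : z ∈ A := hsubγ ⟨hzU, hzh⟩
        have hzx' : z = x := by
          have hz2 : z ∈ W ∩ A := ⟨hzW, hzA⟩
          rw [hWA] at hz2
          exact hz2
        exact S.irrefl x (hzx' ▸ hzx)
  have hsub : S0 ⊆ Set.Iio κ := fun α hα => hα.1
  obtain ⟨C₀, hC₀club, hC₀dis⟩ := aux_discrete_club S0 hsub KEY
  refine ⟨?_, ?_, ?_⟩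
  · intro α hα
    rcases eq_or_lt_of_le (zero_le : (0:Ordinal) ≤ α) with h0 | hpos
    · refine ⟨Set.Iio 1, isOpen_Iio, ?_⟩
      ext γ
      simp only [Set.mem_inter_iff, Set.mem_Iio, Set.mem_singleton_iff]
      constructor
      · rintro ⟨h1, _⟩
        rw [Ordinal.lt_one_iff_zero.1 h1, ← h0]
      · rintro rfl
        exact ⟨by rw [← h0]; exact zero_lt_one, hα⟩
    · obtain ⟨β, hβα, hβ⟩ := KEY α hα hpos
      refine ⟨Set.Ioo β (α + 1), isOpen_Ioo, ?_⟩
      ext γ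
      simp only [Set.mem_inter_iff, Set.mem_Ioo, Set.mem_singleton_iff]
      constructor
      · rintro ⟨⟨h1, h2⟩, hγS⟩
        rw [Ordinal.add_one_eq_succ, Order.lt_succ_iff] at h2
        rcases lt_or_eq_of_le h2 with h | h
        · exact absurd hγS (hβ γ h1 h)
        · exact h
      · rintro rfl
        exact ⟨⟨hβα, lt_add_one _⟩, hα⟩
  · intro hstat
    obtain ⟨α, hαS, hαC⟩ := hstat C₀ hC₀club
    exact hC₀dis α hαS hαC
  · intro C hCclub
    obtain ⟨α, hαU, hαC, hαC₀⟩ := hUstat (C ∩ C₀) (aux_club_inter hCclub hC₀club)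
    obtain ⟨x, hxU, hxh⟩ := hαU
    have hαS : α ∉ S0 := fun h => hC₀dis α h hαC₀
    have hακ : α < κ := hxh ▸ hLT x
    have hne : (U ∩ S.level α).Nonempty := ⟨x, hxU, hxh⟩
    have hns : ¬ (U ∩ S.level α ⊆ A) := fun h => hαS ⟨hακ, hne, h⟩
    obtain ⟨y, hy, hyA⟩ := Set.not_subset.1 hns
    exact ⟨α, ⟨y, ⟨hy.1, hyA⟩, hy.2⟩, hαC⟩
end

section
/- Let T be an ω₁-tree, U ⊆ T a stationary open set in the tree topology, B any metric space, and ψ : U → B continuous (with respect to the subspace tree topology on U), such that each fiber ψ⁻¹{b} (b ∈ B) is discrete in the tree topology. Then there are infinitely many b ∈ B such that ψ⁻¹(N_ε(b)) is stationary for every ε > 0, where N_ε(b) = {z ∈ B : d(b,z) < ε}. -/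
noncomputable section
open Classical Set Ordinal

namespace O1P

abbrev ω1 : Ordinal.{0} := (Cardinal.aleph 1).ord

lemma lt_self_add_one (a : Ordinal) : a < a + 1 := by
  rw [Ordinal.add_one_eq_succ]; exact Order.lt_succ a

lemma kappa_isLimit : Order.IsSuccLimit ω1 := Cardinal.isSuccLimit_ord (Cardinal.aleph0_le_aleph 1)

lemma succ_lt_kappa {α : Ordinal} (h : α < ω1) : α + 1 < ω1 := by
  rw [Ordinal.add_one_eq_succ]; exact kappa_isLimit.succ_lt h

lemma card_lt_of_lt_kappa {α : Ordinal} (h : α < ω1) : α.card ≤ Cardinal.aleph0 := by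
  have h2 := Cardinal.lt_ord.1 h
  rw [← Cardinal.succ_aleph0] at h2
  exact Order.lt_succ_iff.1 h2

lemma sup_lt_kappa {f : ℕ → Ordinal} (h : ∀ n, f n < ω1) : iSup f < ω1 := by
  apply Ordinal.iSup_lt_of_lt_cof _ h
  rw [Cardinal.isRegular_aleph_one.cof_eq]
  exact lt_of_le_of_lt Cardinal.mk_le_aleph0 Cardinal.aleph0_lt_aleph_one

lemma countable_Iio {β : Ordinal} (h : β < ω1) : Countable (Set.Iio β) := by
  rw [← Cardinal.mk_le_aleph0_iff, Ordinal.mk_Iio_ordinal, ← Cardinal.lift_aleph0.{1,0}]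
  exact Cardinal.lift_le.2 (card_lt_of_lt_kappa h)

/-- Intersection of an ℕ-indexed family of clubs is club. -/
lemma isClubIn_iInter_nat (C : ℕ → Set Ordinal) (h : ∀ n, IsClubIn (C n) ω1) :
    IsClubIn (⋂ n, C n) ω1 := by
  constructor
  · intro α hα hα0 hlp
    refine Set.mem_iInter.2 fun n => (h n).1 α hα hα0 fun β hβ => ?_
    obtain ⟨γ, hγ, h1, h2⟩ := hlp β hβ
    exact ⟨γ, Set.mem_iInter.1 hγ n, h1, h2⟩
  · intro α hα
    have hch : ∀ n : ℕ, ∃ g : Ordinal → Ordinal,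
        ∀ β, β < ω1 → g β ∈ C n ∧ β < g β ∧ g β < ω1 := by
      intro n
      refine ⟨fun β => if hβ : β < ω1 then choose ((h n).2 β hβ) else 0, fun β hβ => ?_⟩
      dsimp only
      rw [dif_pos hβ]
      obtain ⟨h1, h2, h3⟩ := choose_spec ((h n).2 β hβ)
      exact ⟨h1, h2, h3⟩
    choose G hG using hch
    set e : ℕ → Ordinal := fun k => Nat.rec (α + 1) (fun _ β => (iSup fun n => G n β) + 1) k with he
    have he0 : e 0 = α + 1 := rfl
    have hes : ∀ k, e (k + 1) = (iSup fun n => G n (e k)) + 1 := fun k => rfl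
    have hek : ∀ k, e k < ω1 ∧ α < e k := by
      intro k; induction k with
      | zero => exact ⟨by rw [he0]; exact succ_lt_kappa hα, by rw [he0]; exact lt_self_add_one α⟩
      | succ k ih =>
        rw [hes k]
        refine ⟨succ_lt_kappa (sup_lt_kappa fun n => (hG n (e k) ih.1).2.2), ?_⟩
        calc α < e k := ih.2
        _ ≤ iSup fun n => G n (e k) := le_of_lt
            (lt_of_lt_of_le (hG 0 (e k) ih.1).2.1 (Ordinal.le_iSup _ 0))
        _ < _ := lt_self_add_one _
    have hmono : ∀ k, e k < e (k + 1) := by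
      intro k
      rw [hes k]
      calc e k < G 0 (e k) := (hG 0 (e k) (hek k).1).2.1
      _ ≤ iSup fun n => G n (e k) := Ordinal.le_iSup _ 0
      _ < _ := lt_self_add_one _
    set lam := iSup e with hlam
    have hlamω1 : lam < ω1 := sup_lt_kappa fun k => (hek k).1
    have hαlam : α < lam := lt_of_lt_of_le (hek 0).2 (Ordinal.le_iSup e 0)
    have hlam0 : lam ≠ 0 := fun h0 => by simp [h0] at hαlam
    refine ⟨lam, Set.mem_iInter.2 fun n => ?_, hαlam, hlamω1⟩
    apply (h n).1 lam hlamω1 hlam0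
    intro β hβ
    obtain ⟨k, hk⟩ := Ordinal.lt_iSup_iff.1 hβ
    refine ⟨G n (e k), (hG n (e k) (hek k).1).1, lt_trans hk (hG n (e k) (hek k).1).2.1, ?_⟩
    calc G n (e k) ≤ iSup fun m => G m (e k) := Ordinal.le_iSup _ n
    _ < e (k + 1) := by rw [hes k]; exact lt_self_add_one _
    _ < e (k + 2) := hmono (k+1)
    _ ≤ lam := Ordinal.le_iSup e (k+2)

lemma isClubIn_univ : IsClubIn Set.univ ω1 :=
  ⟨fun α hα _ _ => Set.mem_univ α, fun α hα =>
    ⟨α + 1, Set.mem_univ _, lt_self_add_one α, succ_lt_kappa hα⟩⟩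

lemma isClubIn_iInter {ι : Type*} [Countable ι] (C : ι → Set Ordinal)
    (h : ∀ i, IsClubIn (C i) ω1) : IsClubIn (⋂ i, C i) ω1 := by
  rcases isEmpty_or_nonempty ι with hι | hι
  · rw [Set.iInter_of_empty]; exact isClubIn_univ
  · obtain ⟨f, hf⟩ := exists_surjective_nat ι
    have : (⋂ i, C i) = ⋂ n, C (f n) := by
      apply subset_antisymm
      · exact fun x hx => Set.mem_iInter.2 fun n => Set.mem_iInter.1 hx (f n)
      · intro x hx
        refine Set.mem_iInter.2 fun i => ?_
        obtain ⟨n, rfl⟩ := hf i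
        exact Set.mem_iInter.1 hx n
    rw [this]
    exact isClubIn_iInter_nat _ fun n => h (f n)

lemma isClubIn_inter {C D : Set Ordinal} (hC : IsClubIn C ω1) (hD : IsClubIn D ω1) :
    IsClubIn (C ∩ D) ω1 := by
  have h2 := isClubIn_iInter (fun b : Bool => Bool.rec D C b)
    (fun b => by cases b with
      | false => exact hD
      | true => exact hC)
  have h3 : (⋂ b : Bool, Bool.rec D C b) = C ∩ D := by
    ext x
    simp only [Set.mem_iInter, Set.mem_inter_iff, Bool.forall_bool]
    exact ⟨fun h => ⟨h.2, h.1⟩, fun h => ⟨h.2, h.1⟩⟩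
  rwa [h3] at h2

lemma stat_mono {A A' : Set Ordinal} (h : A ⊆ A') (hA : IsStationaryIn A ω1) :
    IsStationaryIn A' ω1 := fun C hC => (hA C hC).imp fun x hx => ⟨h hx.1, hx.2⟩

lemma stat_inter_club {A C : Set Ordinal} (hA : IsStationaryIn A ω1) (hC : IsClubIn C ω1) :
    IsStationaryIn (A ∩ C) ω1 := by
  intro D hD
  obtain ⟨x, hx1, hx2, hx3⟩ := hA (C ∩ D) (isClubIn_inter hC hD)
  exact ⟨x, ⟨hx1, hx2⟩, hx3⟩

lemma stat_nonempty {A : Set Ordinal} (hA : IsStationaryIn A ω1) : A.Nonempty :=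
  (hA Set.univ isClubIn_univ).imp fun _ h => h.1

lemma isClubIn_Ioo {γ : Ordinal} (hγ : γ < ω1) : IsClubIn {β | γ < β ∧ β < ω1} ω1 := by
  constructor
  · intro α hα hα0 hlp
    obtain ⟨δ, hδ, _, hδα⟩ := hlp 0 (pos_iff_ne_zero.2 hα0)
    exact ⟨lt_trans hδ.1 hδα, hα⟩
  · intro α hα
    refine ⟨max α γ + 1, ⟨?_, ?_⟩, ?_, ?_⟩
    · exact lt_of_le_of_lt (le_max_right α γ) (lt_self_add_one _)
    · exact succ_lt_kappa (max_lt hα hγ)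
    · exact lt_of_le_of_lt (le_max_left α γ) (lt_self_add_one _)
    · exact succ_lt_kappa (max_lt hα hγ)

lemma isClubIn_limits : IsClubIn {α : Ordinal | Order.IsSuccLimit α} ω1 := by
  constructor
  · intro α hα hα0 hlp
    refine Ordinal.isSuccLimit_iff.2 ⟨hα0, Order.isSuccPrelimit_iff_succ_lt.2 fun β hβ => ?_⟩
    obtain ⟨δ, _, hβδ, hδα⟩ := hlp β hβ
    exact lt_of_le_of_lt (Order.succ_le_of_lt hβδ) hδα
  · intro α hα
    refine ⟨α + Ordinal.omega0, Ordinal.isSuccLimit_add α Ordinal.isSuccLimit_omega0, ?_, ?_⟩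
    · exact (add_lt_add_iff_left α).2 Ordinal.omega0_pos |>.trans_le' (by simp)
    · rw [Cardinal.lt_ord, Ordinal.card_add, Ordinal.card_omega0]
      exact Cardinal.add_lt_of_lt (Cardinal.aleph0_le_aleph 1) (Cardinal.lt_ord.1 hα)
        Cardinal.aleph0_lt_aleph_one

/-- Splitting a stationary set along a map into a countable set. -/
lemma stat_split {T' : Type*} {A : Set Ordinal} (hA : IsStationaryIn A ω1)
    (g : Ordinal → T') {K : Set T'} (hK : K.Countable) (hg : ∀ α ∈ A, g α ∈ K) :
    ∃ t ∈ K, IsStationaryIn {α | α ∈ A ∧ g α = t} ω1 := by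
  by_contra hcon
  push_neg at hcon
  have hcl : ∀ t : K, ∃ C : Set Ordinal, IsClubIn C ω1 ∧ {α | α ∈ A ∧ g α = t.1} ∩ C = ∅ := by
    intro t
    have := hcon t.1 t.2
    rw [IsStationaryIn] at this
    push_neg at this
    exact this
  choose C hC1 hC2 using hcl
  haveI := hK.to_subtype
  obtain ⟨α, hαA, hαC⟩ := hA (⋂ t, C t) (isClubIn_iInter _ hC1)
  have : α ∈ {β | β ∈ A ∧ g β = (⟨g α, hg α hαA⟩ : K).1} ∩ C ⟨g α, hg α hαA⟩ :=
    ⟨⟨hαA, rfl⟩, Set.mem_iInter.1 hαC _⟩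
  rw [hC2] at this
  exact this

lemma stat_union_pair {X Y : Set Ordinal} (h : IsStationaryIn (X ∪ Y) ω1) :
    IsStationaryIn X ω1 ∨ IsStationaryIn Y ω1 := by
  by_contra hcon
  push_neg at hcon
  obtain ⟨h1, h2⟩ := hcon
  rw [IsStationaryIn] at h1 h2; push_neg at h1 h2
  obtain ⟨C, hC, hCe⟩ := h1
  obtain ⟨D, hD, hDe⟩ := h2
  obtain ⟨α, hα1, hα2, hα3⟩ := h (C ∩ D) (isClubIn_inter hC hD)
  rcases hα1 with hx | hy
  · have : α ∈ X ∩ C := ⟨hx, hα2⟩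
    rw [hCe] at this; exact this
  · have : α ∈ Y ∩ D := ⟨hy, hα3⟩
    rw [hDe] at this; exact this

/-- Fodor's lemma for ω1 = ω₁. -/
lemma fodor {A : Set Ordinal} (hA : IsStationaryIn A ω1) {f : Ordinal → Ordinal}
    (hf : ∀ α ∈ A, f α < α) : ∃ γ, IsStationaryIn {α | α ∈ A ∧ f α = γ} ω1 := by
  by_contra hcon
  push_neg at hcon
  have hcl : ∀ γ : Ordinal, ∃ C : Set Ordinal, IsClubIn C ω1 ∧ {α | α ∈ A ∧ f α = γ} ∩ C = ∅ := by
    intro γ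
    have := hcon γ
    rw [IsStationaryIn] at this; push_neg at this
    exact this
  choose C hC1 hC2 using hcl
  set Δ : Set Ordinal := {α | α < ω1 ∧ ∀ γ < α, α ∈ C γ} with hΔ
  have hΔclub : IsClubIn Δ ω1 := by
    constructor
    · intro α hα hα0 hlp
      refine ⟨hα, fun γ hγ => ?_⟩
      apply (hC1 γ).1 α hα hα0
      intro β hβ
      obtain ⟨δ, hδΔ, hδ1, hδ2⟩ := hlp (max γ β) (max_lt hγ hβ)
      exact ⟨δ, hδΔ.2 γ (lt_of_le_of_lt (le_max_left γ β) hδ1),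
        lt_of_le_of_lt (le_max_right γ β) hδ1, hδ2⟩
    · intro α hα
      have hF : ∀ β : Ordinal, β < ω1 → ∃ δ : Ordinal,
          (∀ γ < β, δ ∈ C γ) ∧ β < δ ∧ δ < ω1 := by
        intro β hβ
        haveI := countable_Iio hβ
        have hclub : IsClubIn (⋂ γ : Set.Iio β, C γ.1) ω1 := isClubIn_iInter _ fun γ => hC1 γ.1
        obtain ⟨δ, hδ1, hδ2, hδ3⟩ := hclub.2 β hβ
        exact ⟨δ, fun γ hγ => Set.mem_iInter.1 hδ1 ⟨γ, hγ⟩, hδ2, hδ3⟩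
      set F : Ordinal → Ordinal := fun β => if hβ : β < ω1 then choose (hF β hβ) else 0 with hFdef
      have hFs : ∀ β, β < ω1 → (∀ γ < β, F β ∈ C γ) ∧ β < F β ∧ F β < ω1 := by
        intro β hβ
        rw [hFdef]
        dsimp only
        rw [dif_pos hβ]
        exact choose_spec (hF β hβ)
      set e : ℕ → Ordinal := fun k => Nat.rec (α + 1) (fun _ β => F β) k with he
      have he0 : e 0 = α + 1 := rfl
      have hes : ∀ k, e (k + 1) = F (e k) := fun k => rfl
      have hek : ∀ k, e k < ω1 ∧ α < e k := by
        intro k; induction k with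
        | zero => exact ⟨by rw [he0]; exact succ_lt_kappa hα, by rw [he0]; exact lt_self_add_one α⟩
        | succ k ih =>
          rw [hes k]
          exact ⟨(hFs (e k) ih.1).2.2, lt_trans ih.2 (hFs (e k) ih.1).2.1⟩
      have hmono : ∀ k, e k < e (k + 1) := fun k => by
        rw [hes k]; exact (hFs (e k) (hek k).1).2.1
      set lam := iSup e with hlam
      have hlamω1 : lam < ω1 := sup_lt_kappa fun k => (hek k).1
      have hαlam : α < lam := lt_of_lt_of_le (hek 0).2 (Ordinal.le_iSup e 0)
      have hlam0 : lam ≠ 0 := fun h0 => by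
        rw [h0] at hαlam; exact absurd hαlam (not_lt_of_ge (zero_le (a := α)))
      refine ⟨lam, ⟨hlamω1, fun γ hγ => ?_⟩, hαlam, hlamω1⟩
      apply (hC1 γ).1 lam hlamω1 hlam0
      intro β hβ
      obtain ⟨k, hk⟩ := Ordinal.lt_iSup_iff.1 (show max β γ < lam from max_lt hβ hγ)
      refine ⟨e (k+1), ?_, ?_, ?_⟩
      · rw [hes k]; exact (hFs (e k) (hek k).1).1 γ (lt_of_le_of_lt (le_max_right β γ) hk)
      · exact lt_trans (lt_of_le_of_lt (le_max_left β γ) hk) (hmono k)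
      · exact lt_of_lt_of_le (hmono (k+1)) (Ordinal.le_iSup e (k+2))
  obtain ⟨α, hαA, hαΔ⟩ := hA Δ hΔclub
  have hfα : f α < α := hf α hαA
  have : α ∈ {β | β ∈ A ∧ f β = f α} ∩ C (f α) := ⟨⟨hαA, rfl⟩, hαΔ.2 (f α) hfα⟩
  rw [hC2] at this
  exact this

section TreeLemmas

variable {T : Type} (S : TreeOrder T)

lemma trich {x y z : T} (hy : S.lt y x) (hz : S.lt z x) :
    S.lt y z ∨ y = z ∨ S.lt z y := by
  letI := S.wellOrdered x
  rcases @trichotomous _ (fun a b : {w : T // S.lt w x} => S.lt a.1 b.1) _ ⟨y, hy⟩ ⟨z, hz⟩ with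
    h | h | h
  · exact Or.inl h
  · exact Or.inr (Or.inl (congrArg Subtype.val h))
  · exact Or.inr (Or.inr h)

lemma height_eq_typein {x y : T} (hy : S.lt y x) :
    S.height y = @Ordinal.typein {z : T // S.lt z x} (fun a b => S.lt a.1 b.1)
      (S.wellOrdered x) ⟨y, hy⟩ := by
  letI := S.wellOrdered x
  rw [← Ordinal.type_subrel]
  letI := S.wellOrdered y
  refine Ordinal.type_eq.2 ⟨?_⟩
  exact RelIso.mk
    (Equiv.mk (fun w => ⟨⟨w.1, S.trans w.2 hy⟩, w.2⟩) (fun p => ⟨p.1.1, p.2⟩)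
      (fun w => rfl) (fun p => rfl)) (Iff.rfl)

lemma lt_iff_height_lt {x y z : T} (hy : S.lt y x) (hz : S.lt z x) :
    S.lt y z ↔ S.height y < S.height z := by
  letI := S.wellOrdered x
  rw [height_eq_typein S hy, height_eq_typein S hz, Ordinal.typein_lt_typein]

lemma height_lt_of_lt {x y : T} (hy : S.lt y x) : S.height y < S.height x := by
  letI := S.wellOrdered x
  rw [height_eq_typein S hy]
  exact Ordinal.typein_lt_type _ _

lemma exists_height_eq {x : T} {δ : Ordinal} (hδ : δ < S.height x) :
    ∃ y, S.lt y x ∧ S.height y = δ := by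
  letI := S.wellOrdered x
  obtain ⟨a, ha⟩ := Ordinal.typein_surj (fun a b : {w : T // S.lt w x} => S.lt a.1 b.1) hδ
  exact ⟨a.1, a.2, by rw [height_eq_typein S a.2]; exact ha⟩

lemma height_lt_omega1 (hT : S.IsOmega1Tree) (x : T) : S.height x < O1P.ω1 := by
  by_contra h
  push_neg at h
  rcases eq_or_lt_of_le h with h | h
  · have : x ∈ S.level O1P.ω1 := h.symm
    rw [hT.2.2] at this
    exact this
  · obtain ⟨y, _, hy2⟩ := exists_height_eq S h
    have : y ∈ S.level O1P.ω1 := hy2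
    rw [hT.2.2] at this
    exact this

lemma exists_upper_bound {x p q : T} (hp : S.lt p x) (hq : S.lt q x) :
    ∃ m, S.lt m x ∧ ∀ z, S.lt m z → S.lt p z ∧ S.lt q z := by
  rcases trich S hp hq with h | h | h
  · exact ⟨q, hq, fun z hz => ⟨S.trans h hz, hz⟩⟩
  · exact ⟨q, hq, fun z hz => ⟨h ▸ hz, hz⟩⟩
  · exact ⟨p, hp, fun z hz => ⟨hz, S.trans h hz⟩⟩

end TreeLemmas

section Interval

variable {T : Type} (S : TreeOrder T) {B : Type} [MetricSpace B]

lemma interval_control {U : Set T} (hUopen : S.TreeOpen U) {ψ : T → B}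
    (hcont : ∀ V : Set B, IsOpen V → ∃ W : Set T, S.TreeOpen W ∧ {x ∈ U | ψ x ∈ V} = W ∩ U)
    {x : T} (hx : x ∈ U) (hlim : Order.IsSuccLimit (S.height x)) {ε : ℝ} (hε : 0 < ε) :
    ∃ p, S.lt p x ∧ ∀ z, S.lt p z → S.lt z x → z ∈ U ∧ dist (ψ z) (ψ x) < ε := by
  obtain ⟨W, hWo, hWeq⟩ := hcont (Metric.ball (ψ x) ε) Metric.isOpen_ball
  have hxW : x ∈ W := by
    have h1 : x ∈ {y ∈ U | ψ y ∈ Metric.ball (ψ x) ε} := ⟨hx, Metric.mem_ball_self hε⟩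
    rw [hWeq] at h1
    exact h1.1
  obtain ⟨w, hw1, hw2⟩ := hWo x hxW hlim
  obtain ⟨u, hu1, hu2⟩ := hUopen x hx hlim
  obtain ⟨m, hm1, hm2⟩ := exists_upper_bound S hw1 hu1
  refine ⟨m, hm1, fun z hz1 hz2 => ?_⟩
  have hzU : z ∈ U := hu2 z (hm2 z hz1).2 hz2
  have h2 : z ∈ W ∩ U := ⟨hw2 z (hm2 z hz1).1 hz2, hzU⟩
  rw [← hWeq] at h2
  exact ⟨h2.1, Metric.mem_ball.1 h2.2⟩

lemma interval_control' {U : Set T} (hUopen : S.TreeOpen U) {ψ : T → B}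
    (hcont : ∀ V : Set B, IsOpen V → ∃ W : Set T, S.TreeOpen W ∧ {x ∈ U | ψ x ∈ V} = W ∩ U)
    (hdisc : ∀ b : B, S.TDiscrete {x ∈ U | ψ x = b})
    {x : T} (hx : x ∈ U) (hlim : Order.IsSuccLimit (S.height x)) {ε : ℝ} (hε : 0 < ε) :
    ∃ p, S.lt p x ∧ ∀ z, S.lt p z → S.lt z x →
      z ∈ U ∧ dist (ψ z) (ψ x) < ε ∧ ψ z ≠ ψ x := by
  obtain ⟨p₁, hp₁, hint⟩ := interval_control S hUopen hcont hx hlim hε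
  obtain ⟨V, hVo, hxV, hVfib⟩ := hdisc (ψ x) x ⟨hx, rfl⟩
  obtain ⟨v, hv1, hv2⟩ := hVo x hxV hlim
  obtain ⟨m, hm1, hm2⟩ := exists_upper_bound S hp₁ hv1
  refine ⟨m, hm1, fun z hz1 hz2 => ?_⟩
  obtain ⟨hzU, hzd⟩ := hint z (hm2 z hz1).1 hz2
  refine ⟨hzU, hzd, fun he => ?_⟩
  have h2 : z ∈ V ∩ {y ∈ U | ψ y = ψ x} := ⟨hv2 z (hm2 z hz1).2 hz2, hzU, he⟩
  rw [hVfib] at h2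
  rw [Set.mem_singleton_iff.1 h2] at hz2
  exact S.irrefl x hz2

lemma nonempty_of_tree (hT : S.IsOmega1Tree) : Nonempty T := by
  rw [← Cardinal.mk_ne_zero_iff, hT.1]
  exact ne_of_gt (lt_trans Cardinal.aleph0_pos Cardinal.aleph0_lt_aleph_one)

/-- The core pressing-down lemma: every stationary subset of `U` contains a point whose
value is a "stationary value". -/
lemma core (hT : S.IsOmega1Tree) {U : Set T} (hUopen : S.TreeOpen U) {ψ : T → B}
    (hcont : ∀ V : Set B, IsOpen V → ∃ W : Set T, S.TreeOpen W ∧ {x ∈ U | ψ x ∈ V} = W ∩ U)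
    {W : Set T} (hWst : S.TStationary W) (hWU : W ⊆ U) :
    ∃ x ∈ W, ∀ ε > (0:ℝ), S.TStationary {z ∈ U | dist (ψ z) (ψ x) < ε} := by
  haveI : Nonempty T := nonempty_of_tree S hT
  by_contra hcon
  push_neg at hcon
  have hns : ∀ x, x ∈ W → ∃ n : ℕ,
      ¬ S.TStationary {z ∈ U | dist (ψ z) (ψ x) < 1/(n+1)} := by
    intro x hx
    obtain ⟨ε, hε, hne⟩ := hcon x hx
    obtain ⟨n, hn⟩ := exists_nat_one_div_lt hε
    refine ⟨n, fun hst => hne (stat_mono ?_ hst)⟩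
    exact Set.image_mono (fun z hz => ⟨hz.1, lt_trans hz.2 hn⟩)
  choose! nf hnf using hns
  -- select representatives of each height
  set xsel : Ordinal → T := fun α =>
    if h : α ∈ S.height '' W then h.choose else Classical.arbitrary T with hxseldef
  have hxsel : ∀ α, α ∈ S.height '' W → xsel α ∈ W ∧ S.height (xsel α) = α := by
    intro α h
    rw [hxseldef]
    dsimp only
    rw [dif_pos h]
    exact h.choose_spec
  set A : Set Ordinal := (S.height '' W) ∩ {α : Ordinal | Order.IsSuccLimit α} with hA
  have hAst : IsStationaryIn A ω1 := stat_inter_club hWst isClubIn_limits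
  obtain ⟨n, -, hA₁⟩ := stat_split hAst (fun α => nf (xsel α))
    (Set.countable_univ : (Set.univ : Set ℕ).Countable) (fun α _ => Set.mem_univ _)
  set A₁ : Set Ordinal := {α | α ∈ A ∧ nf (xsel α) = n} with hA₁def
  set ε : ℝ := 1/(n+1) with hεdef
  have hε : 0 < ε := by positivity
  have hiv : ∀ α, α ∈ A₁ → ∃ p, S.lt p (xsel α) ∧ ∀ z, S.lt p z → S.lt z (xsel α) →
      z ∈ U ∧ dist (ψ z) (ψ (xsel α)) < ε/2 := by
    intro α hα
    have hx := hxsel α hα.1.1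
    exact interval_control S hUopen hcont (hWU hx.1) (hx.2.symm ▸ hα.1.2) (half_pos hε)
  choose! pf hpf1 hpf2 using hiv
  have hreg : ∀ α ∈ A₁, S.height (pf α) < α := by
    intro α hα
    have hx := hxsel α hα.1.1
    have h := height_lt_of_lt S (hpf1 α hα)
    rwa [hx.2] at h
  obtain ⟨γ, hA₂⟩ := fodor hA₁ hreg
  set A₂ : Set Ordinal := {α | α ∈ A₁ ∧ S.height (pf α) = γ} with hA₂def
  have hγκ : γ < ω1 := by
    obtain ⟨α, hα⟩ := stat_nonempty hA₂
    obtain ⟨x, -, hx2⟩ := hα.1.1.1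
    exact lt_trans (hα.2 ▸ hreg α hα.1) (hx2 ▸ height_lt_omega1 S hT x)
  have hγ1κ : γ + 1 < ω1 := succ_lt_kappa hγκ
  have hA₃ : IsStationaryIn (A₂ ∩ {β | γ + 1 < β ∧ β < ω1}) ω1 :=
    stat_inter_club hA₂ (isClubIn_Ioo hγ1κ)
  set A₃ : Set Ordinal := A₂ ∩ {β | γ + 1 < β ∧ β < ω1} with hA₃def
  have hsv : ∀ α, α ∈ A₃ → ∃ s, S.lt s (xsel α) ∧ S.height s = γ + 1 := by
    intro α hα
    have hx := hxsel α hα.1.1.1.1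
    exact exists_height_eq S (hx.2.symm ▸ hα.2.1)
  choose! sf hsf1 hsf2 using hsv
  have hsint : ∀ α ∈ A₃, sf α ∈ U ∧ dist (ψ (sf α)) (ψ (xsel α)) < ε/2 := by
    intro α hα
    refine hpf2 α hα.1.1 (sf α) ?_ (hsf1 α hα)
    refine (lt_iff_height_lt S (hpf1 α hα.1.1) (hsf1 α hα)).2 ?_
    rw [hα.1.2, hsf2 α hα]
    exact lt_self_add_one γ
  have hsK : ∀ α ∈ A₃, sf α ∈ S.level (γ + 1) := fun α hα => hsf2 α hα
  obtain ⟨s, -, hA₄⟩ := stat_split hA₃ sf (hT.2.1 (γ + 1)) hsK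
  set A₄ : Set Ordinal := {α | α ∈ A₃ ∧ sf α = s} with hA₄def
  obtain ⟨α₀, hα₀⟩ := stat_nonempty hA₄
  set x₀ : T := xsel α₀ with hx₀def
  have hx₀W : x₀ ∈ W := (hxsel α₀ hα₀.1.1.1.1.1).1
  have hclaim : A₄ ⊆ S.height '' {z ∈ U | dist (ψ z) (ψ x₀) < ε} := by
    intro α hα
    have hx := hxsel α hα.1.1.1.1.1
    refine ⟨xsel α, ⟨hWU hx.1, ?_⟩, hx.2⟩
    have h1 : dist (ψ (sf α)) (ψ (xsel α)) < ε/2 := (hsint α hα.1).2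
    have h2 : dist (ψ (sf α₀)) (ψ (xsel α₀)) < ε/2 := (hsint α₀ hα₀.1).2
    rw [hα.2] at h1
    rw [hα₀.2] at h2
    calc dist (ψ (xsel α)) (ψ x₀) ≤ dist (ψ (xsel α)) (ψ s) + dist (ψ s) (ψ x₀) :=
      dist_triangle _ _ _
    _ < ε/2 + ε/2 := by
        rw [dist_comm (ψ (xsel α)) (ψ s)]
        exact add_lt_add h1 h2
    _ = ε := add_halves ε
  have hst : S.TStationary {z ∈ U | dist (ψ z) (ψ x₀) < ε} := stat_mono hclaim hA₄
  have hn0 : nf x₀ = n := hα₀.1.1.1.2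
  have := hnf x₀ hx₀W
  rw [hn0] at this
  exact this hst

end Interval
end O1P
end

/-- If `U ⊆ T` is a stationary open set, `B` a metric space, and `ψ : U → B` continuous
(w.r.t. the subspace tree topology on `U`) with every fiber discrete in the tree topology,
then there are infinitely many `b ∈ B` such that `ψ⁻¹(N_ε(b))` is stationary for all
`ε > 0`. -/
theorem many_stationary_centers {T : Type} (S : TreeOrder T) (hT : S.IsOmega1Tree)
    (U : Set T) (hUopen : S.TreeOpen U) (hUstat : S.TStationary U)
    (B : Type) [MetricSpace B] (ψ : T → B)
    (hcont : ∀ V : Set B, IsOpen V →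
      ∃ W : Set T, S.TreeOpen W ∧ {x ∈ U | ψ x ∈ V} = W ∩ U)
    (hdisc : ∀ b : B, S.TDiscrete {x ∈ U | ψ x = b}) :
    {b : B | ∀ ε > (0 : ℝ), S.TStationary {x ∈ U | dist (ψ x) b < ε}}.Infinite := by
  classical
  haveI : Nonempty T := O1P.nonempty_of_tree S hT
  by_contra hfin
  rw [Set.not_infinite] at hfin
  set SV := {b : B | ∀ ε > (0 : ℝ), S.TStationary {x ∈ U | dist (ψ x) b < ε}} with hSVdef
  have claimI : ∀ P : Set T, S.TStationary P → P ⊆ U → (∀ z ∈ P, ψ z ∉ SV) → False := by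
    intro P hPst hPU hPav
    obtain ⟨x, hxP, hx⟩ := O1P.core S hT hUopen hcont hPst hPU
    exact hPav x hxP hx
  have hW' : ¬ S.TStationary {x ∈ U | ψ x ∉ SV} := fun h =>
    claimI _ h (fun z hz => hz.1) (fun z hz => hz.2)
  have hU' : S.TStationary {x ∈ U | ψ x ∈ SV} := by
    have huni : IsStationaryIn
        ((S.height '' {x ∈ U | ψ x ∉ SV}) ∪ (S.height '' {x ∈ U | ψ x ∈ SV})) O1P.ω1 := by
      apply O1P.stat_mono _ hUstat
      rw [← Set.image_union]
      apply Set.image_mono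
      intro x hx
      by_cases hsv : ψ x ∈ SV
      · exact Or.inr ⟨hx, hsv⟩
      · exact Or.inl ⟨hx, hsv⟩
    rcases O1P.stat_union_pair huni with h | h
    · exact absurd h hW'
    · exact h
  -- select representatives
  set U' := {x ∈ U | ψ x ∈ SV} with hU'def
  set xsel : Ordinal → T := fun α =>
    if h : α ∈ S.height '' U' then h.choose else Classical.arbitrary T with hxseldef
  have hxsel : ∀ α, α ∈ S.height '' U' → xsel α ∈ U' ∧ S.height (xsel α) = α := by
    intro α h
    rw [hxseldef]
    dsimp only
    rw [dif_pos h]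
    exact h.choose_spec
  set A : Set Ordinal := (S.height '' U') ∩ {α : Ordinal | Order.IsSuccLimit α} with hA
  have hAst : IsStationaryIn A O1P.ω1 := O1P.stat_inter_club hU' O1P.isClubIn_limits
  obtain ⟨b, hbSV, hAb⟩ := O1P.stat_split hAst (fun α => ψ (xsel α)) hfin.countable
    (fun α hα => (hxsel α hα.1).1.2)
  set Ab : Set Ordinal := {α | α ∈ A ∧ ψ (xsel α) = b} with hAbdef
  obtain ⟨δ, hδpos, hδ⟩ : ∃ δ : ℝ, 0 < δ ∧ ∀ b' ∈ SV, b' ≠ b → δ ≤ dist b b' := by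
    rcases Set.eq_empty_or_nonempty (SV \ {b}) with he | hne
    · refine ⟨1, one_pos, fun b' hb' hb'b => absurd ?_ (Set.notMem_empty b')⟩
      rw [← he]
      exact ⟨hb', hb'b⟩
    · obtain ⟨b₀, hb₀, hmin⟩ := Set.exists_min_image (SV \ {b}) (fun b' => dist b b')
        hfin.diff hne
      refine ⟨dist b b₀, dist_pos.2 (fun hh => hb₀.2 (by rw [← hh]; rfl)), ?_⟩
      exact fun b' hb' hb'b => hmin b' ⟨hb', hb'b⟩
  have hiv : ∀ α, α ∈ Ab → ∃ p, S.lt p (xsel α) ∧ ∀ z, S.lt p z → S.lt z (xsel α) →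
      z ∈ U ∧ dist (ψ z) (ψ (xsel α)) < δ ∧ ψ z ≠ ψ (xsel α) := by
    intro α hα
    have hx := hxsel α hα.1.1
    exact O1P.interval_control' S hUopen hcont hdisc hx.1.1 (hx.2.symm ▸ hα.1.2) hδpos
  choose! pf hpf1 hpf2 using hiv
  have hreg : ∀ α ∈ Ab, S.height (pf α) < α := by
    intro α hα
    have hx := hxsel α hα.1.1
    have h := O1P.height_lt_of_lt S (hpf1 α hα)
    rwa [hx.2] at h
  obtain ⟨γ, hA₅⟩ := O1P.fodor hAb hreg
  set A₅ : Set Ordinal := {α | α ∈ Ab ∧ S.height (pf α) = γ} with hA₅def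
  have hγκ : γ < O1P.ω1 := by
    obtain ⟨α, hα⟩ := O1P.stat_nonempty hA₅
    obtain ⟨x, -, hx2⟩ := hα.1.1.1
    exact lt_trans (hα.2 ▸ hreg α hα.1) (hx2 ▸ O1P.height_lt_omega1 S hT x)
  set P : Set T := {z ∈ U | ψ z ≠ b ∧ dist (ψ z) b < δ} with hPdef
  have hPst : S.TStationary P := by
    intro C hC
    obtain ⟨β₀, hβ₀C, hγβ₀, hβ₀κ⟩ := hC.2 γ hγκ
    obtain ⟨α, hαA₅, hβ₀α, hακ⟩ := O1P.stat_nonempty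
      (O1P.stat_inter_club hA₅ (O1P.isClubIn_Ioo hβ₀κ))
    have hx := hxsel α hαA₅.1.1.1
    obtain ⟨z, hz1, hz2⟩ := O1P.exists_height_eq S (δ := β₀) (by rw [hx.2]; exact hβ₀α)
    have hpz : S.lt (pf α) z := by
      refine (O1P.lt_iff_height_lt S (hpf1 α hαA₅.1) hz1).2 ?_
      rw [hαA₅.2, hz2]
      exact hγβ₀
    obtain ⟨hzU, hzd, hzne⟩ := hpf2 α hαA₅.1 z hpz hz1
    rw [hαA₅.1.2] at hzd hzne
    exact ⟨β₀, ⟨z, ⟨hzU, hzne, hzd⟩, hz2⟩, hβ₀C⟩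
  refine claimI P hPst (fun z hz => hz.1) ?_
  intro z hz hzSV
  rcases eq_or_ne (ψ z) b with he | hne
  · exact hz.2.1 he
  · exact absurd hz.2.2 (not_lt.2 (by rw [dist_comm]; exact hδ (ψ z) hzSV hne))
end

section
/- Let T be an Aronszajn tree and suppose there is an order preserving map φ : T → ℝ. Then there is a continuous order preserving map ψ : T → ℝ (continuity with respect to the tree topology), namely ψ(y) = φ(y) when height(y) is not a limit ordinal and ψ(y) = sup{φ(x) : x ◁ y} when height(y) is a limit ordinal. -/
/-- If `T` is an Aronszajn tree with an order preserving map `φ : T → ℝ`, then the map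
`ψ` with `ψ y = φ y` at non-limit heights and `ψ y = sup {φ x : x ◁ y}` at limit heights
is a continuous order preserving map `ψ : T → ℝ`. -/
theorem continuous_from_order_preserving {T : Type} (S : TreeOrder T)
    (hT : S.IsAronszajn) (φ : T → ℝ) (hφ : ∀ x y, S.lt x y → φ x < φ y) :
    ∃ ψ : T → ℝ, S.TContinuous ψ ∧ (∀ x y, S.lt x y → ψ x < ψ y) ∧
      (∀ y, ¬ Order.IsSuccLimit (S.height y) → ψ y = φ y) ∧
      (∀ y, Order.IsSuccLimit (S.height y) → ψ y = sSup (φ '' S.below y)) := by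
  classical
  set ψ : T → ℝ := fun y => if Order.IsSuccLimit (S.height y) then sSup (φ '' S.below y) else φ y
    with hψdef
  have hne : ∀ y : T, Order.IsSuccLimit (S.height y) → (φ '' S.below y).Nonempty := by
    intro y hlim
    have h0 : S.height y ≠ 0 := (Ordinal.isSuccLimit_iff.1 hlim).1
    have : Nonempty {z : T // S.lt z y} := by
      by_contra h
      exact h0 (@Ordinal.type_eq_zero_iff_isEmpty _ _ (S.wellOrdered y) |>.2 (not_nonempty_iff.1 h))
    obtain ⟨z⟩ := this
    exact ⟨φ z.1, ⟨z.1, z.2, rfl⟩⟩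
  have hbdd : ∀ y : T, BddAbove (φ '' S.below y) := by
    intro y
    exact ⟨φ y, by rintro _ ⟨x, hx, rfl⟩; exact (hφ x y hx).le⟩
  have hle : ∀ z : T, ψ z ≤ φ z := by
    intro z
    by_cases h : Order.IsSuccLimit (S.height z)
    · simp only [hψdef, if_pos h]
      exact csSup_le (hne z h) (by rintro _ ⟨x, hx, rfl⟩; exact (hφ x z hx).le)
    · simp [hψdef, if_neg h]
  have hge : ∀ x z : T, S.lt x z → φ x ≤ ψ z := by
    intro x z hxz
    by_cases h : Order.IsSuccLimit (S.height z)
    · simp only [hψdef, if_pos h]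
      exact le_csSup (hbdd z) ⟨x, hxz, rfl⟩
    · simp only [hψdef, if_neg h]
      exact (hφ x z hxz).le
  have hmid : ∀ x y : T, S.lt x y → Order.IsSuccLimit (S.height y) → ∃ x', S.lt x x' ∧ S.lt x' y := by
    intro x y hxy hlim
    letI := S.wellOrdered y
    set r : {z : T // S.lt z y} → {z : T // S.lt z y} → Prop := fun a b => S.lt a.1 b.1 with hr
    have h1 : Order.succ (Ordinal.typein r ⟨x, hxy⟩) < Ordinal.type r :=
      hlim.succ_lt (Ordinal.typein_lt_type r ⟨x, hxy⟩)
    obtain ⟨x', hx'⟩ := Ordinal.typein_surj r h1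
    refine ⟨x'.1, ?_, x'.2⟩
    have h2 : Ordinal.typein r ⟨x, hxy⟩ < Ordinal.typein r x' := by
      rw [hx']; exact Order.lt_succ _
    exact (Ordinal.typein_lt_typein r).1 h2
  have hmono : ∀ x y : T, S.lt x y → ψ x < ψ y := by
    intro x y hxy
    by_cases h : Order.IsSuccLimit (S.height y)
    · obtain ⟨x', hxx', hx'y⟩ := hmid x y hxy h
      calc ψ x ≤ φ x := hle x
        _ < φ x' := hφ x x' hxx'
        _ ≤ ψ y := hge x' y hx'y
    · calc ψ x ≤ φ x := hle x
        _ < φ y := hφ x y hxy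
        _ = ψ y := by simp [hψdef, if_neg h]
  refine ⟨ψ, ?_, hmono, fun y hy => by simp [hψdef, if_neg hy],
    fun y hy => by simp [hψdef, if_pos hy]⟩
  intro V hV y hy hlim
  obtain ⟨ε, hε, hball⟩ := Metric.isOpen_iff.1 hV (ψ y) hy
  have hψy : ψ y = sSup (φ '' S.below y) := by simp [hψdef, if_pos hlim]
  have hlt : ψ y - ε < sSup (φ '' S.below y) := by
    rw [← hψy]; linarith
  obtain ⟨_, ⟨x, hxy, rfl⟩, hx⟩ := exists_lt_of_lt_csSup (hne y hlim) hlt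
  refine ⟨x, hxy, fun z hxz hzy => ?_⟩
  apply hball
  have h1 : φ x ≤ ψ z := hge x z hxz
  have h2 : ψ z ≤ ψ y := by
    calc ψ z ≤ φ z := hle z
      _ ≤ ψ y := hge z y hzy
  rw [Metric.mem_ball, Real.dist_eq, abs_lt]
  constructor <;> linarith
end

section
/- Let T be a special Aronszajn tree and let B ⊆ ℝ contain a subset F homeomorphic to the Cantor space 2^ω. Then there exists a continuous order preserving map ψ : T → B (continuity with respect to the tree topology). -/
open Set Metric

lemma perfect_split (K : Set ℝ) (hK : Perfect K) (hne : K.Nonempty) (δ : ℝ) (hδ : 0 < δ) :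
    ∃ p : Set ℝ × Set ℝ,
      (Perfect p.1 ∧ p.1.Nonempty) ∧ (Perfect p.2 ∧ p.2.Nonempty) ∧
      p.1 ⊆ K ∧ p.2 ⊆ K ∧
      (∀ x ∈ p.1, ∀ y ∈ p.1, |x - y| ≤ δ) ∧ (∀ x ∈ p.2, ∀ y ∈ p.2, |x - y| ≤ δ) ∧
      (∀ x ∈ p.1, ∀ y ∈ p.2, x < y) := by
  obtain ⟨a, ha⟩ := hne
  have hacc := hK.acc a ha
  rw [accPt_iff_nhds] at hacc
  obtain ⟨b, hb, hba⟩ := hacc (Metric.ball a 1) (Metric.ball_mem_nhds a one_pos)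
  have hbK : b ∈ K := hb.2
  set u := min a b with hu
  set v := max a b with hv
  have huK : u ∈ K := by rcases min_choice a b with h | h <;> rw [hu, h] <;> assumption
  have hvK : v ∈ K := by rcases max_choice a b with h | h <;> rw [hv, h] <;> assumption
  have huv : u < v := min_lt_max.mpr hba.symm
  set ε := min (δ/2) ((v-u)/3) with hε
  have hεpos : 0 < ε := lt_min (by linarith) (by linarith)
  have hεδ : ε ≤ δ/2 := min_le_left _ _
  have hεuv : ε ≤ (v-u)/3 := min_le_right _ _
  obtain ⟨hP0, hN0⟩ := hK.closure_nhds_inter u huK (mem_ball_self hεpos) isOpen_ball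
  obtain ⟨hP1, hN1⟩ := hK.closure_nhds_inter v hvK (mem_ball_self hεpos) isOpen_ball
  refine ⟨(closure (ball u ε ∩ K), closure (ball v ε ∩ K)), ⟨hP0, hN0⟩, ⟨hP1, hN1⟩, ?_, ?_, ?_, ?_, ?_⟩
  · calc closure (ball u ε ∩ K) ⊆ closure K := closure_mono inter_subset_right
      _ = K := hK.closed.closure_eq
  · calc closure (ball v ε ∩ K) ⊆ closure K := closure_mono inter_subset_right
      _ = K := hK.closed.closure_eq
  · intro x hx y hy
    have hx' : x ∈ closedBall u ε := closure_ball_subset_closedBall (closure_mono inter_subset_left hx)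
    have hy' : y ∈ closedBall u ε := closure_ball_subset_closedBall (closure_mono inter_subset_left hy)
    rw [mem_closedBall, Real.dist_eq] at hx' hy'
    rw [abs_le] at *
    constructor <;> [linarith [hx'.1, hx'.2, hy'.1, hy'.2]; linarith [hx'.1, hx'.2, hy'.1, hy'.2]]
  · intro x hx y hy
    have hx' : x ∈ closedBall v ε := closure_ball_subset_closedBall (closure_mono inter_subset_left hx)
    have hy' : y ∈ closedBall v ε := closure_ball_subset_closedBall (closure_mono inter_subset_left hy)
    rw [mem_closedBall, Real.dist_eq] at hx' hy'
    rw [abs_le] at *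
    constructor <;> [linarith [hx'.1, hx'.2, hy'.1, hy'.2]; linarith [hx'.1, hx'.2, hy'.1, hy'.2]]
  · intro x hx y hy
    have hx' : x ∈ closedBall u ε := closure_ball_subset_closedBall (closure_mono inter_subset_left hx)
    have hy' : y ∈ closedBall v ε := closure_ball_subset_closedBall (closure_mono inter_subset_left hy)
    rw [mem_closedBall, Real.dist_eq, abs_le] at hx' hy'
    linarith [hx'.1, hx'.2, hy'.1, hy'.2]

open scoped Classical in
noncomputable def splitPair (K : Set ℝ) (δ : ℝ) : Set ℝ × Set ℝ :=
  if h : Perfect K ∧ K.Nonempty ∧ 0 < δ then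
    (perfect_split K h.1 h.2.1 δ h.2.2).choose
  else (K, K)

open scoped Classical in
lemma splitPair_spec {K : Set ℝ} {δ : ℝ} (h : Perfect K ∧ K.Nonempty ∧ 0 < δ) :
    (Perfect (splitPair K δ).1 ∧ (splitPair K δ).1.Nonempty) ∧
    (Perfect (splitPair K δ).2 ∧ (splitPair K δ).2.Nonempty) ∧
    (splitPair K δ).1 ⊆ K ∧ (splitPair K δ).2 ⊆ K ∧
    (∀ x ∈ (splitPair K δ).1, ∀ y ∈ (splitPair K δ).1, |x - y| ≤ δ) ∧
    (∀ x ∈ (splitPair K δ).2, ∀ y ∈ (splitPair K δ).2, |x - y| ≤ δ) ∧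
    (∀ x ∈ (splitPair K δ).1, ∀ y ∈ (splitPair K δ).2, x < y) := by
  rw [splitPair, dif_pos h]
  exact (perfect_split K h.1 h.2.1 δ h.2.2).choose_spec

noncomputable def scheme (R : Set ℝ) : List Bool → Set ℝ
  | [] => R
  | b :: s => if b then (splitPair (scheme R s) ((1/2)^(s.length+1))).2
              else (splitPair (scheme R s) ((1/2)^(s.length+1))).1

def goodRoot (R : Set ℝ) : Prop :=
  Perfect R ∧ R.Nonempty ∧ ∀ x ∈ R, ∀ y ∈ R, |x - y| ≤ 1

lemma scheme_pn {R : Set ℝ} (hR : goodRoot R) : ∀ s : List Bool,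
    Perfect (scheme R s) ∧ (scheme R s).Nonempty ∧
      ∀ x ∈ scheme R s, ∀ y ∈ scheme R s, |x - y| ≤ (1/2 : ℝ)^s.length := by
  intro s
  induction s with
  | nil => simpa [scheme, goodRoot] using hR
  | cons b s ih =>
    have hpos : (0:ℝ) < (1/2)^(s.length+1) := by positivity
    have hs := splitPair_spec ⟨ih.1, ih.2.1, hpos⟩
    cases b with
    | false => exact ⟨hs.1.1, hs.1.2, by simpa [scheme] using hs.2.2.2.2.1⟩
    | true => exact ⟨hs.2.1.1, hs.2.1.2, by simpa [scheme] using hs.2.2.2.2.2.1⟩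

lemma scheme_cons_subset {R : Set ℝ} (hR : goodRoot R) (b : Bool) (s : List Bool) :
    scheme R (b :: s) ⊆ scheme R s := by
  have ih := scheme_pn hR s
  have hpos : (0:ℝ) < (1/2)^(s.length+1) := by positivity
  have hs := splitPair_spec ⟨ih.1, ih.2.1, hpos⟩
  cases b with
  | false => simpa [scheme] using hs.2.2.1
  | true => simpa [scheme] using hs.2.2.2.1

lemma scheme_sep {R : Set ℝ} (hR : goodRoot R) (s : List Bool) :
    ∀ x ∈ scheme R (false :: s), ∀ y ∈ scheme R (true :: s), x < y := by
  have ih := scheme_pn hR s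
  have hpos : (0:ℝ) < (1/2)^(s.length+1) := by positivity
  have hs := splitPair_spec ⟨ih.1, ih.2.1, hpos⟩
  simpa [scheme] using hs.2.2.2.2.2.2

/-- the reversed truncation of `a` -/
def tr (a : ℕ → Bool) : ℕ → List Bool
  | 0 => []
  | n+1 => a n :: tr a n

@[simp] lemma tr_length (a : ℕ → Bool) (n : ℕ) : (tr a n).length = n := by
  induction n with
  | zero => rfl
  | succ n ih => simp [tr, ih]

lemma tr_eq_of_agree {a b : ℕ → Bool} {n : ℕ} (h : ∀ m < n, a m = b m) :
    tr a n = tr b n := by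
  induction n with
  | zero => rfl
  | succ n ih =>
    simp only [tr]
    rw [h n (Nat.lt_succ_self n), ih fun m hm => h m (Nat.lt_succ_of_lt hm)]

lemma scheme_tr_mono {R : Set ℝ} (hR : goodRoot R) (a : ℕ → Bool) {n m : ℕ} (h : n ≤ m) :
    scheme R (tr a m) ⊆ scheme R (tr a n) := by
  induction m, h using Nat.le_induction with
  | base => exact subset_rfl
  | succ m hm ih => exact subset_trans (scheme_cons_subset hR (a m) (tr a m)) ih

noncomputable def cpt (R : Set ℝ) (hR : goodRoot R) (a : ℕ → Bool) (n : ℕ) : ℝ :=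
  ((scheme_pn hR (tr a n)).2.1).choose

lemma cpt_mem (R : Set ℝ) (hR : goodRoot R) (a : ℕ → Bool) (n : ℕ) :
    cpt R hR a n ∈ scheme R (tr a n) := ((scheme_pn hR (tr a n)).2.1).choose_spec

lemma cpt_cauchy (R : Set ℝ) (hR : goodRoot R) (a : ℕ → Bool) : CauchySeq (cpt R hR a) := by
  apply cauchySeq_of_le_geometric (1/2) 1 (by norm_num)
  intro n
  have h1 : cpt R hR a n ∈ scheme R (tr a n) := cpt_mem R hR a n
  have h2 : cpt R hR a (n+1) ∈ scheme R (tr a n) :=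
    scheme_tr_mono hR a (Nat.le_succ n) (cpt_mem R hR a (n+1))
  have := (scheme_pn hR (tr a n)).2.2 _ h1 _ h2
  rw [tr_length] at this
  rw [Real.dist_eq]
  calc |cpt R hR a n - cpt R hR a (n+1)| ≤ (1/2)^n := this
    _ = 1 * (1/2)^n := (one_mul _).symm

noncomputable def climit (R : Set ℝ) (hR : goodRoot R) (a : ℕ → Bool) : ℝ :=
  (cauchySeq_tendsto_of_complete (cpt_cauchy R hR a)).choose

lemma climit_tendsto (R : Set ℝ) (hR : goodRoot R) (a : ℕ → Bool) :
    Filter.Tendsto (cpt R hR a) Filter.atTop (nhds (climit R hR a)) :=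
  (cauchySeq_tendsto_of_complete (cpt_cauchy R hR a)).choose_spec

lemma climit_mem (R : Set ℝ) (hR : goodRoot R) (a : ℕ → Bool) (n : ℕ) :
    climit R hR a ∈ scheme R (tr a n) := by
  apply (scheme_pn hR (tr a n)).1.closed.mem_of_tendsto (climit_tendsto R hR a)
  rw [Filter.eventually_atTop]
  exact ⟨n, fun m hm => scheme_tr_mono hR a hm (cpt_mem R hR a m)⟩

lemma climit_mem_root (R : Set ℝ) (hR : goodRoot R) (a : ℕ → Bool) : climit R hR a ∈ R :=
  climit_mem R hR a 0

lemma climit_close (R : Set ℝ) (hR : goodRoot R) {a b : ℕ → Bool} {n : ℕ}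
    (h : ∀ m < n, a m = b m) : |climit R hR a - climit R hR b| ≤ (1/2 : ℝ)^n := by
  have h1 : climit R hR a ∈ scheme R (tr a n) := climit_mem R hR a n
  have h2 : climit R hR b ∈ scheme R (tr a n) := by
    rw [tr_eq_of_agree h]; exact climit_mem R hR b n
  have := (scheme_pn hR (tr a n)).2.2 _ h1 _ h2
  rwa [tr_length] at this

lemma climit_lt (R : Set ℝ) (hR : goodRoot R) {a b : ℕ → Bool} {n : ℕ}
    (h : ∀ m < n, a m = b m) (ha : a n = false) (hb : b n = true) :
    climit R hR a < climit R hR b := by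
  have h1 : climit R hR a ∈ scheme R (false :: tr a n) := by
    have := climit_mem R hR a (n+1)
    simpa [tr, ha] using this
  have h2 : climit R hR b ∈ scheme R (true :: tr a n) := by
    have := climit_mem R hR b (n+1)
    rw [tr_eq_of_agree h]
    simpa [tr, hb] using this
  exact scheme_sep hR (tr a n) _ h1 _ h2

/-- If `T` is a special Aronszajn tree and `B ⊆ ℝ` contains a subset `F` homeomorphic to
the Cantor space `2^ω`, then there is a continuous order preserving map `ψ : T → B`. -/
theorem continuous_map_into_cantor {T : Type} (S : TreeOrder T)
    (hS : S.IsSpecialAronszajn)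
    (B F : Set ℝ) (hFB : F ⊆ B) (hF : Nonempty (F ≃ₜ (ℕ → Bool))) :
    ∃ ψ : T → ℝ, (∀ x, ψ x ∈ B) ∧ S.TContinuous ψ ∧
      ∀ x y, S.lt x y → ψ x < ψ y := by
  classical
  -- F is compact, closed, uncountable
  obtain ⟨h⟩ := hF
  have hcomp : IsCompact F := by
    have : CompactSpace F := h.symm.compactSpace
    exact isCompact_iff_compactSpace.mpr this
  have hclosed : IsClosed F := hcomp.isClosed
  have hFunc : ¬ F.Countable := by
    intro hc
    have hc1 : Countable F := hc.to_subtype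
    have hc2 : Countable (ℕ → Bool) := Countable.of_equiv _ h.toEquiv
    have h1 : Cardinal.mk (ℕ → Bool) ≤ Cardinal.aleph0 := Cardinal.mk_le_aleph0
    have h2 : Cardinal.mk (ℕ → Bool) = 2 ^ Cardinal.aleph0 := by
      rw [← Cardinal.power_def, Cardinal.mk_bool, Cardinal.mk_nat]
    rw [h2] at h1
    exact absurd h1 (not_le.mpr (Cardinal.cantor _))
  obtain ⟨V', D, hVc, hD, hFVD⟩ := exists_countable_union_perfect_of_isClosed hclosed
  have hDne : D.Nonempty := by
    rcases Set.eq_empty_or_nonempty D with hE | hE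
    · exfalso; apply hFunc; rw [hFVD, hE, Set.union_empty]; exact hVc
    · exact hE
  have hDF : D ⊆ F := hFVD ▸ Set.subset_union_right
  obtain ⟨p, hp⟩ := perfect_split D hD hDne 1 one_pos
  set R := p.1 with hRdef
  have hR : goodRoot R := ⟨hp.1.1, hp.1.2, hp.2.2.2.2.1⟩
  have hRF : R ⊆ F := subset_trans hp.2.2.1 hDF
  -- specialness gives an antichain labelling
  obtain ⟨A, hA, hAcov⟩ := hS.2
  have hmem : ∀ x : T, ∃ n, x ∈ A n := fun x => by
    have hx : x ∈ ⋃ n, A n := hAcov ▸ Set.mem_univ x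
    exact Set.mem_iUnion.mp hx
  choose f hf using hmem
  have hfne : ∀ {x y : T}, S.lt x y → f x ≠ f y := by
    intro x y hxy heq
    have hxA : x ∈ A (f y) := heq ▸ hf x
    have hne : x ≠ y := fun he => S.irrefl x (he ▸ hxy)
    exact (hA (f y)) hxA (hf y) hne hxy
  -- characteristic functions
  set chi : T → ℕ → Bool := fun y n => decide (∃ z, S.lt z y ∧ f z = n) with hchi
  have chi_true : ∀ y n, chi y n = true ↔ ∃ z, S.lt z y ∧ f z = n := fun y n => by
    simp [hchi]
  set ψ : T → ℝ := fun y => climit R hR (chi y) with hψ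
  have hψz : ∀ z, ψ z = climit R hR (chi z) := fun z => by rw [hψ]
  refine ⟨ψ, ?_, ?_, ?_⟩
  · intro x
    rw [hψz]
    exact hFB (hRF (climit_mem_root R hR (chi x)))
  · -- continuity
    intro V hV y hy hlimit
    obtain ⟨ε, hε, hball⟩ := Metric.isOpen_iff.mp hV (ψ y) hy
    obtain ⟨N, hN⟩ := exists_pow_lt_of_lt_one hε (by norm_num : (1/2:ℝ) < 1)
    have hbne : ∃ z, S.lt z y := by
      by_contra hc
      push_neg at hc
      have hE : IsEmpty {z // S.lt z y} := ⟨fun z => hc z.1 z.2⟩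
      have h0 : S.height y = 0 :=
        (@Ordinal.type_eq_zero_iff_isEmpty _ _ (S.wellOrdered y)).2 hE
      exact hlimit.ne_bot h0
    obtain ⟨x0, hx0⟩ := hbne
    set g : T → ℕ → T :=
      fun y' m => if h' : ∃ w, S.lt w y' ∧ f w = m then h'.choose else x0 with hg
    have hgy : ∀ m, S.lt (g y m) y := fun m => by
      rw [hg]; dsimp only; split_ifs with h'
      · exact h'.choose_spec.1
      · exact hx0
    have hgspec : ∀ m, chi y m = true → S.lt (g y m) y ∧ f (g y m) = m := by
      intro m hm
      rw [chi_true] at hm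
      rw [hg]; dsimp only; rw [dif_pos hm]
      exact hm.choose_spec
    have hmax : ∀ n : ℕ, ∃ x, S.lt x y ∧ ∀ m < n, g y m = x ∨ S.lt (g y m) x := by
      intro n
      induction n with
      | zero => exact ⟨x0, hx0, fun m hm => absurd hm (Nat.not_lt_zero m)⟩
      | succ n ih =>
        obtain ⟨x, hx, hxm⟩ := ih
        have tri := @trichotomous {z // S.lt z y} (fun a b => S.lt a.1 b.1)
          (S.wellOrdered y).toTrichotomous ⟨x, hx⟩ ⟨g y n, hgy n⟩
        rcases tri with htri | htri | htri
        · refine ⟨g y n, hgy n, fun m hm => ?_⟩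
          rcases Nat.lt_succ_iff_lt_or_eq.mp hm with hm' | hm'
          · rcases hxm m hm' with he | hl
            · right; rw [he]; exact htri
            · right; exact S.trans hl htri
          · left; rw [hm']
        · have hxe : x = g y n := congrArg Subtype.val htri
          refine ⟨x, hx, fun m hm => ?_⟩
          rcases Nat.lt_succ_iff_lt_or_eq.mp hm with hm' | hm'
          · exact hxm m hm'
          · left; rw [hm', ← hxe]
        · refine ⟨x, hx, fun m hm => ?_⟩
          rcases Nat.lt_succ_iff_lt_or_eq.mp hm with hm' | hm'
          · exact hxm m hm'
          · right; rw [hm']; exact htri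
    obtain ⟨x, hxlt, hxm⟩ := hmax N
    refine ⟨x, hxlt, fun z hxz hzy => ?_⟩
    have hagree : ∀ m < N, chi z m = chi y m := by
      intro m hm
      rw [hchi]; dsimp only
      apply decide_eq_decide.mpr
      constructor
      · rintro ⟨w, hwz, hfw⟩
        exact ⟨w, S.trans hwz hzy, hfw⟩
      · intro hw
        have hym : chi y m = true := (chi_true y m).2 hw
        obtain ⟨hgm, hfg⟩ := hgspec m hym
        have hlt : S.lt (g y m) z := by
          rcases hxm m hm with he | hl
          · rw [he]; exact hxz
          · exact S.trans hl hxz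
        exact ⟨g y m, hlt, hfg⟩
    have hd := climit_close R hR hagree
    apply hball
    rw [Metric.mem_ball, Real.dist_eq, hψz z, hψz y]
    calc |climit R hR (chi z) - climit R hR (chi y)| ≤ (1/2)^N := hd
      _ < ε := hN
  · -- order preserving
    intro x y hxy
    have hsub : ∀ n, chi x n = true → chi y n = true := by
      intro n hn
      obtain ⟨z, hz, hfz⟩ := (chi_true x n).1 hn
      exact (chi_true y n).2 ⟨z, S.trans hz hxy, hfz⟩
    have hdiff : ∃ n, chi x n ≠ chi y n := by
      refine ⟨f x, ?_⟩
      have h1 : chi y (f x) = true := (chi_true y (f x)).2 ⟨x, hxy, rfl⟩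
      have h2 : ¬ chi x (f x) = true := by
        rw [chi_true]
        rintro ⟨z, hz, hfz⟩
        exact hfne hz hfz
      intro he
      exact h2 (he.trans h1)
    have hn0 : chi x (Nat.find hdiff) ≠ chi y (Nat.find hdiff) := Nat.find_spec hdiff
    have hagree : ∀ m < Nat.find hdiff, chi x m = chi y m := by
      intro m hm
      have := Nat.find_min hdiff hm
      simpa using this
    have hx0 : chi x (Nat.find hdiff) = false := by
      cases hcx : chi x (Nat.find hdiff) with
      | false => rfl
      | true => exact absurd ((hcx.trans (hsub _ hcx).symm).symm ▸ rfl : chi x _ = chi y _) hn0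
    have hy0 : chi y (Nat.find hdiff) = true := by
      cases hcy : chi y (Nat.find hdiff) with
      | true => rfl
      | false => exact absurd (hx0.trans hcy.symm) hn0
    rw [hψz x, hψz y]
    exact climit_lt R hR hagree hx0 hy0
end

section
/- An ω₁-tree T is special (i.e., a countable union of antichains) if and only if there exists an order preserving map φ : T → ℚ. -/
private lemma geo_sum_aux (m K : ℕ) :
    ∑ n ∈ Finset.Ico (m + 1) (m + 1 + K), ((2:ℚ)⁻¹) ^ n
      = (2:ℚ)⁻¹ ^ m - (2:ℚ)⁻¹ ^ (m + K) := by
  induction K with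
  | zero => simp
  | succ K ih =>
      rw [show m + 1 + (K + 1) = (m + 1 + K) + 1 by omega,
        Finset.sum_Ico_succ_top (by omega)]
      rw [ih]
      have : (2:ℚ)⁻¹ ^ (m + K) = (2:ℚ)⁻¹ ^ (m + K + 1) + (2:ℚ)⁻¹ ^ (m + K + 1) := by
        rw [pow_succ]; ring
      rw [show m + 1 + K = m + K + 1 by omega, show m + (K+1) = m + K + 1 by omega]
      linarith

private lemma geo_sum_lt (m K : ℕ) :
    ∑ n ∈ Finset.Ico (m + 1) K, ((2:ℚ)⁻¹) ^ n < (2:ℚ)⁻¹ ^ m := by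
  rcases le_or_gt K (m + 1) with h | h
  · rw [Finset.Ico_eq_empty (by omega)]
    simpa using pow_pos (by norm_num : (0:ℚ) < 2⁻¹) m
  · obtain ⟨K', rfl⟩ : ∃ K', K = m + 1 + K' := ⟨K - (m+1), by omega⟩
    rw [geo_sum_aux]
    have := pow_pos (by norm_num : (0:ℚ) < 2⁻¹) (m + K')
    linarith

/-- An `ω₁`-tree is special (a countable union of antichains) iff there is an order
preserving map `φ : T → ℚ`. -/
theorem special_iff_rational_map {T : Type} (S : TreeOrder T)
    (hT : S.IsOmega1Tree) :
    (∃ A : ℕ → Set T, (∀ n, IsAntichain S.lt (A n)) ∧ (⋃ n, A n) = Set.univ) ↔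
    ∃ φ : T → ℚ, ∀ x y, S.lt x y → φ x < φ y := by
  classical
  constructor
  · rintro ⟨A, hA, hcov⟩
    have hmem : ∀ x : T, ∃ n, x ∈ A n := by
      intro x
      have : x ∈ ⋃ n, A n := hcov ▸ Set.mem_univ x
      simpa using this
    set D : T → ℕ → Prop := fun x n => ∃ y, (S.lt y x ∨ y = x) ∧ y ∈ A n with hD
    set idx : T → ℕ := fun x => Nat.find (hmem x) with hidx
    set E : T → Finset ℕ := fun x => (Finset.range (idx x + 1)).filter (D x) with hE
    refine ⟨fun x => ∑ n ∈ E x, ((2:ℚ)⁻¹) ^ n, ?_⟩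
    intro x y hxy
    set m := idx y with hm
    have hyA : y ∈ A m := Nat.find_spec (hmem y)
    have hmD : ¬ D x m := by
      rintro ⟨z, hz, hzA⟩
      have hzy : S.lt z y := by
        rcases hz with h | rfl
        · exact S.trans h hxy
        · exact hxy
      exact hA m hzA hyA (fun h => S.irrefl z (h ▸ hzy)) hzy
    have hDxy : ∀ n, D x n → D y n := by
      rintro n ⟨z, hz, hzA⟩
      refine ⟨z, Or.inl ?_, hzA⟩
      rcases hz with h | rfl
      · exact S.trans h hxy
      · exact hxy
    have hmEy : m ∈ E y := by
      refine Finset.mem_filter.2 ⟨Finset.mem_range.2 (by omega), ⟨y, Or.inr rfl, hyA⟩⟩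
    -- split the sum over E x
    have hsplit : ∑ n ∈ E x, ((2:ℚ)⁻¹) ^ n
        = ∑ n ∈ (E x).filter (· < m), ((2:ℚ)⁻¹) ^ n
          + ∑ n ∈ (E x).filter (¬ · < m), ((2:ℚ)⁻¹) ^ n :=
      (Finset.sum_filter_add_sum_filter_not _ _ _).symm
    have hsub1 : (E x).filter (· < m) ⊆ (E y).filter (· < m) := by
      intro n hn
      rcases Finset.mem_filter.1 hn with ⟨hn1, hn2⟩
      rcases Finset.mem_filter.1 hn1 with ⟨_, hn3⟩
      exact Finset.mem_filter.2
        ⟨Finset.mem_filter.2 ⟨Finset.mem_range.2 (by omega), hDxy n hn3⟩, hn2⟩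
    have hA1 : ∑ n ∈ (E x).filter (· < m), ((2:ℚ)⁻¹) ^ n
        ≤ ∑ n ∈ (E y).filter (· < m), ((2:ℚ)⁻¹) ^ n := by
      refine Finset.sum_le_sum_of_subset_of_nonneg hsub1 ?_
      intro i _ _
      positivity
    have hsub2 : (E x).filter (¬ · < m) ⊆ Finset.Ico (m + 1) (idx x + 1) := by
      intro n hn
      rcases Finset.mem_filter.1 hn with ⟨hn1, hn2⟩
      rcases Finset.mem_filter.1 hn1 with ⟨hn3, hn4⟩
      have hnm : n ≠ m := fun h => hmD (h ▸ hn4)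
      have := Finset.mem_range.1 hn3
      exact Finset.mem_Ico.2 ⟨by omega, by omega⟩
    have hB : ∑ n ∈ (E x).filter (¬ · < m), ((2:ℚ)⁻¹) ^ n < (2:ℚ)⁻¹ ^ m := by
      calc ∑ n ∈ (E x).filter (¬ · < m), ((2:ℚ)⁻¹) ^ n
          ≤ ∑ n ∈ Finset.Ico (m + 1) (idx x + 1), ((2:ℚ)⁻¹) ^ n := by
            refine Finset.sum_le_sum_of_subset_of_nonneg hsub2 ?_
            intro i _ _
            positivity
        _ < (2:ℚ)⁻¹ ^ m := geo_sum_lt m _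
    have hins : insert m ((E y).filter (· < m)) ⊆ E y := by
      intro n hn
      rcases Finset.mem_insert.1 hn with rfl | hn
      · exact hmEy
      · exact Finset.filter_subset _ _ hn
    have hgy : (2:ℚ)⁻¹ ^ m + ∑ n ∈ (E y).filter (· < m), ((2:ℚ)⁻¹) ^ n
        ≤ ∑ n ∈ E y, ((2:ℚ)⁻¹) ^ n := by
      have hnm : m ∉ (E y).filter (· < m) := by
        intro h
        exact absurd (Finset.mem_filter.1 h).2 (lt_irrefl m)
      calc (2:ℚ)⁻¹ ^ m + ∑ n ∈ (E y).filter (· < m), ((2:ℚ)⁻¹) ^ n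
          = ∑ n ∈ insert m ((E y).filter (· < m)), ((2:ℚ)⁻¹) ^ n :=
            (Finset.sum_insert hnm).symm
        _ ≤ ∑ n ∈ E y, ((2:ℚ)⁻¹) ^ n := by
            refine Finset.sum_le_sum_of_subset_of_nonneg hins ?_
            intro i _ _
            positivity
    have hfin : ∑ n ∈ E x, ((2:ℚ)⁻¹) ^ n < ∑ n ∈ E y, ((2:ℚ)⁻¹) ^ n := by
      rw [hsplit]
      linarith
    exact hfin
  · rintro ⟨φ, hφ⟩
    obtain ⟨q, hq⟩ : ∃ q : ℕ → ℚ, Function.Surjective q :=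
      ⟨_, (Denumerable.eqv ℚ).symm.surjective⟩
    refine ⟨fun n => φ ⁻¹' {q n}, ?_, ?_⟩
    · intro n a ha b hb hne hlt
      have h1 : φ a = q n := ha
      have h2 : φ b = q n := hb
      have := hφ a b hlt
      rw [h1, h2] at this
      exact lt_irrefl _ this
    · ext x
      simp only [Set.mem_iUnion, Set.mem_preimage, Set.mem_singleton_iff, Set.mem_univ,
        iff_true]
      obtain ⟨n, hn⟩ := hq (φ x)
      exact ⟨n, hn.symm⟩
end

section
/- Let T be an ω₁-tree admitting an order preserving map φ : T → ℝ. Then T has no uncountable chains; that is, T is an Aronszajn tree. -/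
/-- An `ω₁`-tree admitting an order preserving map into `ℝ` has no uncountable chains,
i.e. it is an Aronszajn tree. -/
theorem aronszajn_of_order_preserving {T : Type} (S : TreeOrder T)
    (hT : S.IsOmega1Tree) (φ : T → ℝ) (hφ : ∀ x y, S.lt x y → φ x < φ y) :
    S.IsAronszajn := by
  classical
  refine ⟨hT, fun C hC => ?_⟩
  -- Every element of the chain with something above it has a least such element.
  have least : ∀ c ∈ C, (∃ d ∈ C, S.lt c d) →
      ∃ q : ℚ, φ c < (q : ℝ) ∧ ∀ d ∈ C, S.lt c d → (q : ℝ) < φ d := by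
    intro c hc ⟨x, hxC, hcx⟩
    have hwo := S.wellOrdered x
    -- find the least element of C above c
    have hm : ∃ m, m ∈ C ∧ S.lt c m ∧ ∀ d ∈ C, S.lt c d → ¬ S.lt d m := by
      by_cases h : ∃ y : {z : T // S.lt z x}, y.1 ∈ C ∧ S.lt c y.1
      · have wf : WellFounded (fun a b : {z : T // S.lt z x} => S.lt a.1 b.1) :=
          hwo.toIsWellFounded.wf
        set m := wf.min {y | y.1 ∈ C ∧ S.lt c y.1} h with hmdef
        have hmem : m ∈ {y : {z : T // S.lt z x} | y.1 ∈ C ∧ S.lt c y.1} :=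
          wf.min_mem _ h
        refine ⟨m.1, hmem.1, hmem.2, ?_⟩
        intro d hd hcd hdm
        have hdx : S.lt d x := S.trans hdm m.2
        exact wf.not_lt_min {y | y.1 ∈ C ∧ S.lt c y.1}
          (show (⟨d, hdx⟩ : {z : T // S.lt z x}) ∈ _ from ⟨hd, hcd⟩) hdm
      · refine ⟨x, hxC, hcx, ?_⟩
        intro d hd hcd hdx
        exact h ⟨⟨d, hdx⟩, hd, hcd⟩
    obtain ⟨m, hmC, hcm, hleast⟩ := hm
    obtain ⟨q, hq1, hq2⟩ := exists_rat_btwn (hφ c m hcm)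
    refine ⟨q, hq1, ?_⟩
    intro d hd hcd
    by_cases hdm : d = m
    · subst hdm; exact hq2
    · rcases hC hd hmC hdm with h1 | h1
      · exact absurd h1 (hleast d hd hcd)
      · exact hq2.trans (hφ m d h1)
  choose! q hq1 hq2 using least
  -- split the chain into non-maximal elements and (at most one) maximal element
  set C₁ : Set T := {c ∈ C | ∃ d ∈ C, S.lt c d} with hC₁
  have hmono : ∀ a ∈ C₁, ∀ b ∈ C₁, S.lt a b → q a < q b := by
    intro a ha b hb hab
    have h1 : (q a : ℝ) < φ b := hq2 a ha.1 ha.2 b hb.1 hab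
    have h2 : φ b < (q b : ℝ) := hq1 b hb.1 hb.2
    exact_mod_cast h1.trans h2
  have hinj : Set.InjOn q C₁ := by
    intro a ha b hb hqab
    by_contra hne
    rcases hC ha.1 hb.1 hne with h | h
    · exact absurd hqab (ne_of_lt (hmono a ha b hb h))
    · exact absurd hqab.symm (ne_of_lt (hmono b hb a ha h))
  have hC₁c : C₁.Countable :=
    Set.countable_of_injective_of_countable_image hinj (Set.to_countable _)
  have hC₂c : (C \ C₁).Countable := by
    apply Set.Subsingleton.countable
    intro a ha b hb
    by_contra hne
    rcases hC ha.1 hb.1 hne with h | h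
    · exact ha.2 ⟨ha.1, b, hb.1, h⟩
    · exact hb.2 ⟨hb.1, a, ha.1, h⟩
  have : C ⊆ C₁ ∪ (C \ C₁) := by
    intro c hc
    by_cases h : c ∈ C₁
    · exact Or.inl h
    · exact Or.inr ⟨hc, h⟩
  exact Set.Countable.mono this (hC₁c.union hC₂c)
end
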